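/- arXiv:1504.04935 — 2 statements merged into one kernel-verified Lean document; each statement's English description precedes it below -/
import Mathlib

section
/- Let n ≥ 1 and let u, v be independent random vectors each distributed as the standard n-dimensional Gaussian N(0, I_n). Define ψ(x, y) = (xᵀy)²/n − (xᵀx)(yᵀy)/n². Then E[ψ(u, v)²] = 2(n−1)(n+2)/n². -/
open MeasureTheory ProbabilityTheory Filter

/-- The standard Gaussian measure on `ℝⁿ`: the `n`-fold product of the standard
Gaussian measure on `ℝ`. -/
noncomputable def stdGaussian (n : ℕ) : Measure (Fin n → ℝ) :=
  Measure.pi fun _ => gaussianReal 0 1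

/-- `ψ(x, y) = (xᵀy)²/n − (xᵀx)(yᵀy)/n²`. -/
noncomputable def psi (n : ℕ) (x y : Fin n → ℝ) : ℝ :=
  (∑ i, x i * y i) ^ 2 / n - ((∑ i, x i * x i) * (∑ i, y i * y i)) / n ^ 2

namespace PsiAux

open Real Topology Finset
open scoped ENNReal NNReal

/-! ### Moments of the one-dimensional standard Gaussian -/

lemma intg (k : ℕ) : Integrable (fun x : ℝ => x ^ k * Real.exp (-(1/2) * x ^ 2)) := by
  have : (-1 : ℝ) < k := lt_of_lt_of_le (by norm_num) (Nat.cast_nonneg k)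
  simpa [Real.rpow_natCast] using integrable_rpow_mul_exp_neg_mul_sq (by norm_num : (0:ℝ) < 1/2) this

lemma tends0 (m : ℕ) : Tendsto (fun x : ℝ => x ^ m * Real.exp (-(1/2) * x ^ 2)) atTop (𝓝 0) := by
  have h := rpow_mul_exp_neg_mul_sq_isLittleO_exp_neg (by norm_num : (0:ℝ) < 1/2) (m : ℝ)
  have hlin : Tendsto (fun x : ℝ => -(1/2) * x) atTop atBot :=
    tendsto_id.const_mul_atTop_of_neg (by norm_num)
  have h2 : Tendsto (fun x : ℝ => Real.exp (-(1/2) * x)) atTop (𝓝 0) :=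
    Real.tendsto_exp_atBot.comp hlin
  have := h.isBigO.trans_tendsto h2
  refine this.congr' ?_
  filter_upwards [eventually_ge_atTop (0:ℝ)] with x _
  rw [Real.rpow_natCast]

lemma tends0' (m : ℕ) : Tendsto (fun x : ℝ => x ^ m * Real.exp (-(1/2) * x ^ 2)) atBot (𝓝 0) := by
  have h := (tends0 m).comp tendsto_neg_atBot_atTop
  rw [Function.comp_def] at h
  have heq : (fun x : ℝ => (-x) ^ m * Real.exp (-(1/2) * (-x) ^ 2)) =
      fun x : ℝ => (-1) ^ m * (x ^ m * Real.exp (-(1/2) * x ^ 2)) := by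
    funext x; rw [neg_pow]; ring_nf
  rw [heq] at h
  have h3 := h.const_mul ((-1:ℝ) ^ m)
  simpa [← mul_assoc, ← mul_pow] using h3

lemma gauss_rec (k : ℕ) :
    ∫ x : ℝ, x ^ (k+2) * Real.exp (-(1/2) * x ^ 2)
      = (k+1) * ∫ x : ℝ, x ^ k * Real.exp (-(1/2) * x ^ 2) := by
  have hderiv : ∀ x : ℝ, HasDerivAt (fun x : ℝ => x ^ (k+1) * Real.exp (-(1/2) * x ^ 2))
      (((k:ℝ)+1) * (x ^ k * Real.exp (-(1/2) * x ^ 2)) - x ^ (k+2) * Real.exp (-(1/2) * x ^ 2)) x := by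
    intro x
    have h1 : HasDerivAt (fun x : ℝ => x ^ (k+1)) (((k:ℝ)+1) * x ^ k) x := by
      simpa using hasDerivAt_pow (k+1) x
    have h2 : HasDerivAt (fun x : ℝ => -(1/2) * x ^ 2) (-(1/2) * (2 * x ^ 1)) x :=
      (hasDerivAt_pow 2 x).const_mul _
    have h3 := h1.fun_mul h2.exp
    refine h3.congr_deriv ?_
    ring
  have h1a : Integrable (fun x : ℝ => ((k:ℝ)+1) * (x ^ k * Real.exp (-(1/2) * x ^ 2))) :=
    (intg k).const_mul _
  have h1 : Integrable (fun x : ℝ => ((k:ℝ)+1) * (x ^ k * Real.exp (-(1/2) * x ^ 2))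
      - x ^ (k+2) * Real.exp (-(1/2) * x ^ 2)) := h1a.sub (intg (k+2))
  have key := integral_of_hasDerivAt_of_tendsto hderiv h1 (tends0' (k+1)) (tends0 (k+1))
  rw [sub_self, integral_sub h1a (intg (k+2)), integral_const_mul, sub_eq_zero] at key
  exact key.symm

lemma gauss_I0 : ∫ x : ℝ, x ^ 0 * Real.exp (-(1/2) * x ^ 2) = Real.sqrt (2 * Real.pi) := by
  simp only [pow_zero, one_mul]
  rw [integral_gaussian]
  norm_num [mul_comm]

lemma gauss_I1 : ∫ x : ℝ, x ^ 1 * Real.exp (-(1/2) * x ^ 2) = 0 := by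
  have hderiv : ∀ x : ℝ, HasDerivAt (fun x : ℝ => -Real.exp (-(1/2) * x ^ 2))
      (x ^ 1 * Real.exp (-(1/2) * x ^ 2)) x := by
    intro x
    have h2 : HasDerivAt (fun x : ℝ => -(1/2) * x ^ 2) (-(1/2) * (2 * x ^ 1)) x :=
      (hasDerivAt_pow 2 x).const_mul _
    have h3 := h2.exp.fun_neg
    refine h3.congr_deriv ?_
    ring
  have htop : Tendsto (fun x : ℝ => -Real.exp (-(1/2) * x ^ 2)) atTop (𝓝 0) := by
    have := (tends0 0).neg; simpa using this
  have hbot : Tendsto (fun x : ℝ => -Real.exp (-(1/2) * x ^ 2)) atBot (𝓝 0) := by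
    have := (tends0' 0).neg; simpa using this
  have := integral_of_hasDerivAt_of_tendsto hderiv (intg 1) hbot htop
  simpa using this

lemma gaussianPDFReal_eq (x : ℝ) :
    gaussianPDFReal 0 1 x = (Real.sqrt (2 * Real.pi))⁻¹ * Real.exp (-(1/2) * x ^ 2) := by
  rw [gaussianPDFReal]
  push_cast
  rw [mul_one, sub_zero]
  congr 1
  ring

lemma integral_gaussianReal_eq (f : ℝ → ℝ) :
    ∫ x, f x ∂(gaussianReal 0 1) = ∫ x, gaussianPDFReal 0 1 x * f x := by
  rw [gaussianReal_of_var_ne_zero 0 one_ne_zero]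
  have hd : (gaussianPDF 0 1) = fun x => ((gaussianPDFReal 0 1 x).toNNReal : ℝ≥0∞) := rfl
  rw [hd, integral_withDensity_eq_integral_smul
    ((measurable_gaussianPDFReal 0 1).real_toNNReal) f]
  congr 1; funext x
  rw [NNReal.smul_def, Real.coe_toNNReal _ (gaussianPDFReal_nonneg 0 1 x), smul_eq_mul]

lemma integrable_pow_gauss (k : ℕ) : Integrable (fun t : ℝ => t ^ k) (gaussianReal 0 1) := by
  rw [gaussianReal_of_var_ne_zero 0 one_ne_zero]
  have hd : (gaussianPDF 0 1) = fun x => ((gaussianPDFReal 0 1 x).toNNReal : ℝ≥0∞) := rfl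
  rw [hd, integrable_withDensity_iff_integrable_smul
    ((measurable_gaussianPDFReal 0 1).real_toNNReal)]
  have := (intg k).const_mul (Real.sqrt (2 * Real.pi))⁻¹
  apply this.congr
  filter_upwards with x
  rw [NNReal.smul_def, Real.coe_toNNReal _ (gaussianPDFReal_nonneg 0 1 x), smul_eq_mul,
    gaussianPDFReal_eq]
  ring

noncomputable def gMom (k : ℕ) : ℝ := ∫ t, t ^ k ∂(gaussianReal 0 1)

lemma gMom_eq (k : ℕ) :
    gMom k = (Real.sqrt (2 * Real.pi))⁻¹ * ∫ x : ℝ, x ^ k * Real.exp (-(1/2) * x ^ 2) := by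
  rw [gMom, integral_gaussianReal_eq, ← integral_const_mul]
  congr 1; funext x
  rw [gaussianPDFReal_eq]; ring

lemma sqrt2pi_ne : (Real.sqrt (2 * Real.pi)) ≠ 0 := by positivity

lemma gMom_zero : gMom 0 = 1 := by
  rw [gMom_eq, gauss_I0, inv_mul_cancel₀ sqrt2pi_ne]
lemma gMom_one : gMom 1 = 0 := by rw [gMom_eq, gauss_I1, mul_zero]
lemma gMom_two : gMom 2 = 1 := by
  rw [gMom_eq, show (2:ℕ) = 0 + 2 from rfl, gauss_rec, gauss_I0]
  push_cast
  rw [zero_add, one_mul, inv_mul_cancel₀ sqrt2pi_ne]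
lemma gMom_three : gMom 3 = 0 := by
  rw [gMom_eq, show (3:ℕ) = 1 + 2 from rfl, gauss_rec, gauss_I1]
  simp
lemma gMom_four : gMom 4 = 3 := by
  rw [gMom_eq, show (4:ℕ) = 2 + 2 from rfl, gauss_rec, gauss_rec 0,
    gauss_I0]
  push_cast
  field_simp
  ring

/-! ### Integrals of monomials over the standard Gaussian on `ℝⁿ` -/

def G' : Type := ℝ
instance : MeasurableSpace G' := inferInstanceAs (MeasurableSpace ℝ)
noncomputable instance : MeasureSpace G' := ⟨gaussianReal 0 1⟩
instance : IsProbabilityMeasure (volume : Measure G') :=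
  inferInstanceAs (IsProbabilityMeasure (gaussianReal 0 1))
instance (n : ℕ) : IsProbabilityMeasure (stdGaussian n) := by
  unfold _root_.stdGaussian; infer_instance

instance : SigmaFinite (volume : Measure G') := inferInstance

lemma stdG_eq (n : ℕ) : stdGaussian n = (volume : Measure (Fin n → G')) := rfl

lemma integral_std_prod_pow {n : ℕ} (m : Fin n → ℕ) :
    ∫ x, (∏ a, x a ^ m a) ∂(stdGaussian n) = ∏ a, gMom (m a) := by
  rw [stdG_eq n]
  exact MeasureTheory.integral_fintype_prod_eq_prod (ι := Fin n) (E := fun _ => G')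
    (f := fun i (t : G') => (show ℝ from t) ^ m i)

lemma integrable_std_prod_pow {n : ℕ} (m : Fin n → ℕ) :
    Integrable (fun x : Fin n → ℝ => ∏ a, x a ^ m a) (stdGaussian n) := by
  rw [stdG_eq n]
  exact MeasureTheory.Integrable.fintype_prod (f := fun i (t : G') => (show ℝ from t) ^ m i)
    (fun i => integrable_pow_gauss (m i))

variable {n : ℕ}

/-- exponent of the monomial `y i * y j * y k * y l` -/
def m4 (i j k l : Fin n) : Fin n → ℕ := fun a =>
  (if a = i then 1 else 0) + (if a = j then 1 else 0) + (if a = k then 1 else 0)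
    + (if a = l then 1 else 0)

lemma mono4_eq (i j k l : Fin n) (y : Fin n → ℝ) :
    y i * y j * y k * y l = ∏ a, y a ^ (m4 i j k l a) := by
  simp only [m4, pow_add, Finset.prod_mul_distrib, pow_ite, pow_one, pow_zero,
    Finset.prod_ite_eq', Finset.mem_univ, if_true]

lemma integrable_mono4 (i j k l : Fin n) :
    Integrable (fun y : Fin n → ℝ => y i * y j * y k * y l) (stdGaussian n) :=
  (integrable_std_prod_pow (m4 i j k l)).congr
    (Filter.Eventually.of_forall fun y => (mono4_eq i j k l y).symm)

lemma prod_gMom_single (c : ℕ) (i : Fin n) :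
    ∏ a, gMom (if a = i then c else 0) = gMom c := by
  simp [apply_ite gMom, gMom_zero, Finset.prod_ite_eq']

lemma prod_gMom_pair (c d : ℕ) {i j : Fin n} (h : i ≠ j) :
    ∏ a, gMom ((if a = i then c else 0) + (if a = j then d else 0)) = gMom c * gMom d := by
  have key : ∀ a, gMom ((if a = i then c else 0) + (if a = j then d else 0))
      = (if a = i then gMom c else 1) * (if a = j then gMom d else 1) := by
    intro a
    by_cases h1 : a = i <;> by_cases h2 : a = j <;> simp_all [gMom_zero]
  rw [Finset.prod_congr rfl (fun a _ => key a), Finset.prod_mul_distrib]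
  simp [Finset.prod_ite_eq']

lemma prod_gMom_triple (c d e : ℕ) {i j k : Fin n} (h1 : i ≠ j) (h2 : i ≠ k) (h3 : j ≠ k) :
    ∏ a, gMom ((if a = i then c else 0) + (if a = j then d else 0) + (if a = k then e else 0))
      = gMom c * gMom d * gMom e := by
  have key : ∀ a, gMom ((if a = i then c else 0) + (if a = j then d else 0)
        + (if a = k then e else 0))
      = (if a = i then gMom c else 1) * (if a = j then gMom d else 1)
        * (if a = k then gMom e else 1) := by
    intro a
    by_cases g1 : a = i <;> by_cases g2 : a = j <;> by_cases g3 : a = k <;>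
      simp_all [gMom_zero]
  rw [Finset.prod_congr rfl (fun a _ => key a), Finset.prod_mul_distrib,
    Finset.prod_mul_distrib]
  simp [Finset.prod_ite_eq']

lemma prod_gMom_quad (c d e f : ℕ) {i j k l : Fin n} (h1 : i ≠ j) (h2 : i ≠ k) (h3 : i ≠ l)
    (h4 : j ≠ k) (h5 : j ≠ l) (h6 : k ≠ l) :
    ∏ a, gMom ((if a = i then c else 0) + (if a = j then d else 0) + (if a = k then e else 0)
      + (if a = l then f else 0)) = gMom c * gMom d * gMom e * gMom f := by
  have key : ∀ a, gMom ((if a = i then c else 0) + (if a = j then d else 0)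
        + (if a = k then e else 0) + (if a = l then f else 0))
      = (if a = i then gMom c else 1) * (if a = j then gMom d else 1)
        * (if a = k then gMom e else 1) * (if a = l then gMom f else 1) := by
    intro a
    by_cases g1 : a = i <;> by_cases g2 : a = j <;> by_cases g3 : a = k <;>
      by_cases g4 : a = l <;> simp_all [gMom_zero]
  rw [Finset.prod_congr rfl (fun a _ => key a), Finset.prod_mul_distrib,
    Finset.prod_mul_distrib, Finset.prod_mul_distrib]
  simp [Finset.prod_ite_eq']

noncomputable def del (i j : Fin n) : ℝ := if i = j then 1 else 0

lemma E4 (i j k l : Fin n) :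
    ∫ y, y i * y j * y k * y l ∂(stdGaussian n)
      = del i j * del k l + del i k * del j l + del i l * del j k := by
  rw [show (fun y : Fin n → ℝ => y i * y j * y k * y l)
       = fun y => ∏ a, y a ^ (m4 i j k l a) from funext fun y => mono4_eq i j k l y]
  rw [integral_std_prod_pow]
  by_cases hij : i = j
  · subst hij
    by_cases hkl : k = l
    · subst hkl
      by_cases hik : i = k
      · subst hik
        have hm : m4 i i i i = fun a => if a = i then 4 else 0 := by
          funext a; by_cases h : a = i <;> simp [m4, h]
        rw [hm, prod_gMom_single, gMom_four]
        simp [del]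
        norm_num
      · have hm : m4 i i k k = fun a => (if a = i then 2 else 0) + (if a = k then 2 else 0) := by
          funext a; by_cases h1 : a = i <;> by_cases h2 : a = k <;> simp_all [m4]
        rw [hm, prod_gMom_pair _ _ hik, gMom_two]
        simp [del, hik]
    · by_cases hik : i = k
      · subst hik
        have hil : i ≠ l := fun h => hkl (h ▸ rfl)
        have hm : m4 i i i l = fun a => (if a = i then 3 else 0) + (if a = l then 1 else 0) := by
          funext a; by_cases h1 : a = i <;> by_cases h2 : a = l <;> simp_all [m4]
        rw [hm, prod_gMom_pair _ _ hil, gMom_one, mul_zero]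
        simp [del, hkl, hil]
      · by_cases hil : i = l
        · subst hil
          have hm : m4 i i k i = fun a => (if a = i then 3 else 0) + (if a = k then 1 else 0) := by
            funext a; by_cases h1 : a = i <;> by_cases h2 : a = k <;> simp_all [m4]
          rw [hm, prod_gMom_pair _ _ hik, gMom_one, mul_zero]
          simp [del, hkl, hik, Ne.symm hik]
        · have hm : m4 i i k l = fun a => (if a = i then 2 else 0) + (if a = k then 1 else 0)
              + (if a = l then 1 else 0) := by
            funext a
            by_cases h1 : a = i <;> by_cases h2 : a = k <;> by_cases h3 : a = l <;>
              simp_all [m4]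
          rw [hm, prod_gMom_triple _ _ _ hik hil hkl, gMom_one]
          simp [del, hkl, hik, hil]
  · by_cases hkl : k = l
    · subst hkl
      by_cases hik : i = k
      · subst hik
        have hji : j ≠ i := Ne.symm hij
        have hm : m4 i j i i = fun a => (if a = i then 3 else 0) + (if a = j then 1 else 0) := by
          funext a; by_cases h1 : a = i <;> by_cases h2 : a = j <;> simp_all [m4]
        rw [hm, prod_gMom_pair _ _ (Ne.symm hji), gMom_one, mul_zero]
        simp [del, hij, hji]
      · by_cases hjk : j = k
        · subst hjk
          have hm : m4 i j j j = fun a => (if a = i then 1 else 0) + (if a = j then 3 else 0) := by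
            funext a; by_cases h1 : a = i <;> by_cases h2 : a = j <;> simp_all [m4]
          rw [hm, prod_gMom_pair _ _ hij, gMom_one, zero_mul]
          simp [del, hij, hik]
        · have hm : m4 i j k k = fun a => (if a = i then 1 else 0) + (if a = j then 1 else 0)
              + (if a = k then 2 else 0) := by
            funext a
            by_cases h1 : a = i <;> by_cases h2 : a = j <;> by_cases h3 : a = k <;>
              simp_all [m4]
          rw [hm, prod_gMom_triple _ _ _ hij hik hjk, gMom_one]
          simp [del, hij, hik, hjk]
    · by_cases hik : i = k
      · subst hik
        by_cases hjl : j = l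
        · subst hjl
          have hm : m4 i j i j = fun a => (if a = i then 2 else 0) + (if a = j then 2 else 0) := by
            funext a; by_cases h1 : a = i <;> by_cases h2 : a = j <;> simp_all [m4]
          rw [hm, prod_gMom_pair _ _ hij, gMom_two]
          simp [del, hij, hkl]
        · have hm : m4 i j i l = fun a => (if a = i then 2 else 0) + (if a = j then 1 else 0)
              + (if a = l then 1 else 0) := by
            funext a
            by_cases h1 : a = i <;> by_cases h2 : a = j <;> by_cases h3 : a = l <;>
              simp_all [m4]
          rw [hm, prod_gMom_triple _ _ _ hij hkl hjl, gMom_one]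
          simp [del, hij, hjl, hkl]
      · by_cases hil : i = l
        · subst hil
          by_cases hjk : j = k
          · subst hjk
            have hm : m4 i j j i = fun a => (if a = i then 2 else 0) + (if a = j then 2 else 0) := by
              funext a; by_cases h1 : a = i <;> by_cases h2 : a = j <;> simp_all [m4]
            rw [hm, prod_gMom_pair _ _ hij, gMom_two]
            simp [del, hij, hik, Ne.symm hij]
          · have hm : m4 i j k i = fun a => (if a = i then 2 else 0) + (if a = j then 1 else 0)
                + (if a = k then 1 else 0) := by
              funext a
              by_cases h1 : a = i <;> by_cases h2 : a = j <;> by_cases h3 : a = k <;>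
                simp_all [m4]
            rw [hm, prod_gMom_triple _ _ _ hij hik hjk, gMom_one]
            simp [del, hij, hik, hjk]
        · by_cases hjk : j = k
          · subst hjk
            have hjl : j ≠ l := hkl
            have hm : m4 i j j l = fun a => (if a = i then 1 else 0) + (if a = j then 2 else 0)
                + (if a = l then 1 else 0) := by
              funext a
              by_cases h1 : a = i <;> by_cases h2 : a = j <;> by_cases h3 : a = l <;>
                simp_all [m4]
            rw [hm, prod_gMom_triple _ _ _ hij hil hjl, gMom_one]
            simp [del, hij, hil, hjl]
          · by_cases hjl : j = l
            · subst hjl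
              have hm : m4 i j k j = fun a => (if a = i then 1 else 0) + (if a = j then 2 else 0)
                  + (if a = k then 1 else 0) := by
                funext a
                by_cases h1 : a = i <;> by_cases h2 : a = j <;> by_cases h3 : a = k <;>
                  simp_all [m4]
              rw [hm, prod_gMom_triple _ _ _ hij hik hjk, gMom_one]
              simp [del, hij, hik, hjk]
            · have hm : m4 i j k l = fun a => (if a = i then 1 else 0) + (if a = j then 1 else 0)
                  + (if a = k then 1 else 0) + (if a = l then 1 else 0) := rfl
              rw [hm, prod_gMom_quad _ _ _ _ hij hik hil hjk hjl hkl, gMom_one]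
              simp [del, hij, hik, hil, hjk, hjl, hkl]

/-! ### Combinatorial sums -/

lemma sum_ite_pull (P : Prop) [Decidable P] (f : Fin n → ℝ) :
    ∑ x, (if P then f x else 0) = if P then (∑ x, f x) else 0 := by
  split <;> simp

lemma dsum1 : ∑ i : Fin n, ∑ j : Fin n, ∑ k : Fin n, ∑ l : Fin n,
    (del i j * del k l + del i k * del j l + del i l * del j k)
    * (del i j * del k l + del i k * del j l + del i l * del j k)
      = 3 * (n:ℝ)^2 + 6 * n := by
  simp only [del, add_mul, mul_add, mul_ite, ite_mul, mul_one, mul_zero, one_mul, zero_mul,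
    Finset.sum_add_distrib, sum_ite_pull, Finset.sum_ite_eq, Finset.sum_ite_eq', Finset.mem_univ,
    if_true, Finset.sum_const, card_univ, Fintype.card_fin, nsmul_eq_mul, zero_add, add_zero]
  ring

lemma dsum2 : ∑ i : Fin n, ∑ j : Fin n, ∑ k : Fin n, ∑ l : Fin n,
    (del i j * del k k + del i k * del j k + del i k * del j k)
      * (del i j * del l l + del i l * del j l + del i l * del j l)
      = (n:ℝ)^3 + 4 * n^2 + 4 * n := by
  simp only [del, add_mul, mul_add, mul_ite, ite_mul, mul_one, mul_zero, one_mul, zero_mul,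
    Finset.sum_add_distrib, sum_ite_pull, Finset.sum_ite_eq, Finset.sum_ite_eq', Finset.mem_univ,
    if_true, Finset.sum_const, card_univ, Fintype.card_fin, nsmul_eq_mul, zero_add, add_zero]
  ring

lemma dsum3 : ∑ i : Fin n, ∑ j : Fin n, ∑ k : Fin n, ∑ l : Fin n,
    (del i i * del j j + del i j * del i j + del i j * del i j)
      * (del k k * del l l + del k l * del k l + del k l * del k l)
      = ((n:ℝ)^2 + 2*n)^2 := by
  simp only [del, add_mul, mul_add, mul_ite, ite_mul, mul_one, mul_zero, one_mul, zero_mul,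
    Finset.sum_add_distrib, sum_ite_pull, Finset.sum_ite_eq, Finset.sum_ite_eq', Finset.mem_univ,
    if_true, Finset.sum_const, card_univ, Fintype.card_fin, nsmul_eq_mul, zero_add, add_zero]
  ring

/-! ### Expansions -/

lemma quad_expand (f g h e : Fin n → ℝ) :
    ((∑ i, f i) * (∑ j, g j)) * ((∑ k, h k) * (∑ l, e l))
      = ∑ i, ∑ j, ∑ k, ∑ l, f i * g j * (h k * e l) := by
  simp only [Finset.sum_mul_sum]
  exact Finset.sum_congr rfl fun i _ => Finset.sum_comm

lemma expand1 (x y : Fin n → ℝ) :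
    ∑ q : Fin n × Fin n × Fin n × Fin n,
        (x q.1 * x q.2.1 * x q.2.2.1 * x q.2.2.2) * (y q.1 * y q.2.1 * y q.2.2.1 * y q.2.2.2)
      = (∑ i, x i * y i) ^ 4 := by
  simp only [Fintype.sum_prod_type]
  rw [show (∑ i, x i * y i) ^ 4
      = ((∑ i, x i * y i) * (∑ j, x j * y j)) * ((∑ k, x k * y k) * (∑ l, x l * y l)) by ring,
    quad_expand]
  refine Finset.sum_congr rfl fun i _ => Finset.sum_congr rfl fun j _ =>
    Finset.sum_congr rfl fun k _ => Finset.sum_congr rfl fun l _ => by ring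

lemma expand2 (x y : Fin n → ℝ) :
    ∑ q : Fin n × Fin n × Fin n × Fin n,
        (x q.1 * x q.2.1 * x q.2.2.1 * x q.2.2.1) * (y q.1 * y q.2.1 * y q.2.2.2 * y q.2.2.2)
      = (∑ i, x i * y i) ^ 2 * ((∑ i, x i * x i) * (∑ i, y i * y i)) := by
  simp only [Fintype.sum_prod_type]
  rw [show (∑ i, x i * y i) ^ 2 * ((∑ i, x i * x i) * (∑ i, y i * y i))
      = ((∑ i, x i * y i) * (∑ j, x j * y j)) * ((∑ k, x k * x k) * (∑ l, y l * y l)) by ring,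
    quad_expand]
  refine Finset.sum_congr rfl fun i _ => Finset.sum_congr rfl fun j _ =>
    Finset.sum_congr rfl fun k _ => Finset.sum_congr rfl fun l _ => by ring

lemma expand3 (x y : Fin n → ℝ) :
    ∑ q : Fin n × Fin n × Fin n × Fin n,
        (x q.1 * x q.1 * x q.2.1 * x q.2.1) * (y q.2.2.1 * y q.2.2.1 * y q.2.2.2 * y q.2.2.2)
      = ((∑ i, x i * x i) * (∑ i, y i * y i)) ^ 2 := by
  simp only [Fintype.sum_prod_type]
  rw [show ((∑ i, x i * x i) * (∑ i, y i * y i)) ^ 2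
      = ((∑ i, x i * x i) * (∑ j, x j * x j)) * ((∑ k, y k * y k) * (∑ l, y l * y l)) by ring,
    quad_expand]
  refine Finset.sum_congr rfl fun i _ => Finset.sum_congr rfl fun j _ =>
    Finset.sum_congr rfl fun k _ => Finset.sum_congr rfl fun l _ => by ring

/-! ### The three product integrals -/

lemma integral_sum_prod_mul (F G : (Fin n × Fin n × Fin n × Fin n) → (Fin n → ℝ) → ℝ)
    (hF : ∀ q, Integrable (F q) (stdGaussian n)) (hG : ∀ q, Integrable (G q) (stdGaussian n)) :
    ∫ p, (∑ q, F q p.1 * G q p.2) ∂((stdGaussian n).prod (stdGaussian n))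
      = ∑ q, (∫ x, F q x ∂(stdGaussian n)) * (∫ y, G q y ∂(stdGaussian n)) := by
  rw [integral_finset_sum _ (fun q _ => (hF q).mul_prod (hG q))]
  exact Finset.sum_congr rfl fun q _ => integral_prod_mul _ _

lemma intT1 :
    ∫ p : (Fin n → ℝ) × (Fin n → ℝ),
        (∑ q : Fin n × Fin n × Fin n × Fin n,
          (p.1 q.1 * p.1 q.2.1 * p.1 q.2.2.1 * p.1 q.2.2.2)
            * (p.2 q.1 * p.2 q.2.1 * p.2 q.2.2.1 * p.2 q.2.2.2))
        ∂((stdGaussian n).prod (stdGaussian n))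
      = 3 * (n:ℝ)^2 + 6 * n := by
  rw [integral_sum_prod_mul _ _
    (fun q => integrable_mono4 q.1 q.2.1 q.2.2.1 q.2.2.2)
    (fun q => integrable_mono4 q.1 q.2.1 q.2.2.1 q.2.2.2)]
  rw [Finset.sum_congr rfl fun q _ => by rw [E4 q.1 q.2.1 q.2.2.1 q.2.2.2]]
  simp only [Fintype.sum_prod_type]
  exact dsum1

lemma intT2 :
    ∫ p : (Fin n → ℝ) × (Fin n → ℝ),
        (∑ q : Fin n × Fin n × Fin n × Fin n,
          (p.1 q.1 * p.1 q.2.1 * p.1 q.2.2.1 * p.1 q.2.2.1)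
            * (p.2 q.1 * p.2 q.2.1 * p.2 q.2.2.2 * p.2 q.2.2.2))
        ∂((stdGaussian n).prod (stdGaussian n))
      = (n:ℝ)^3 + 4 * n^2 + 4 * n := by
  rw [integral_sum_prod_mul _ _
    (fun q => integrable_mono4 q.1 q.2.1 q.2.2.1 q.2.2.1)
    (fun q => integrable_mono4 q.1 q.2.1 q.2.2.2 q.2.2.2)]
  rw [Finset.sum_congr rfl fun q _ => by
    rw [E4 q.1 q.2.1 q.2.2.1 q.2.2.1, E4 q.1 q.2.1 q.2.2.2 q.2.2.2]]
  simp only [Fintype.sum_prod_type]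
  exact dsum2

lemma intT3 :
    ∫ p : (Fin n → ℝ) × (Fin n → ℝ),
        (∑ q : Fin n × Fin n × Fin n × Fin n,
          (p.1 q.1 * p.1 q.1 * p.1 q.2.1 * p.1 q.2.1)
            * (p.2 q.2.2.1 * p.2 q.2.2.1 * p.2 q.2.2.2 * p.2 q.2.2.2))
        ∂((stdGaussian n).prod (stdGaussian n))
      = ((n:ℝ)^2 + 2*n)^2 := by
  rw [integral_sum_prod_mul _ _
    (fun q => integrable_mono4 q.1 q.1 q.2.1 q.2.1)
    (fun q => integrable_mono4 q.2.2.1 q.2.2.1 q.2.2.2 q.2.2.2)]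
  rw [Finset.sum_congr rfl fun q _ => by
    rw [E4 q.1 q.1 q.2.1 q.2.1, E4 q.2.2.1 q.2.2.1 q.2.2.2 q.2.2.2]]
  simp only [Fintype.sum_prod_type]
  exact dsum3

end PsiAux

open PsiAux

/-- If `u, v` are independent standard `n`-dimensional Gaussian vectors, then
`E[ψ(u, v)²] = 2(n−1)(n+2)/n²`. -/
theorem expectation_psi_sq {Ω : Type*} [MeasurableSpace Ω] (μ : Measure Ω)
    [IsProbabilityMeasure μ]
    (n : ℕ) (hn : 1 ≤ n) (u v : Ω → (Fin n → ℝ))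
    (hu : Measurable u) (hv : Measurable v)
    (hindep : IndepFun u v μ)
    (hud : Measure.map u μ = stdGaussian n)
    (hvd : Measure.map v μ = stdGaussian n) :
    ∫ ω, (psi n (u ω) (v ω)) ^ 2 ∂μ = 2 * ((n : ℝ) - 1) * ((n : ℝ) + 2) / n ^ 2 := by
  have hn0 : (n : ℝ) ≠ 0 := Nat.cast_ne_zero.mpr (by omega)
  -- continuity of the integrand
  have hcont : Continuous fun p : (Fin n → ℝ) × (Fin n → ℝ) => psi n p.1 p.2 ^ 2 := by
    unfold psi
    have c1 : Continuous fun p : (Fin n → ℝ) × (Fin n → ℝ) => ∑ i, p.1 i * p.2 i :=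
      continuous_finset_sum _ fun i _ =>
        ((continuous_apply i).comp continuous_fst).mul ((continuous_apply i).comp continuous_snd)
    have c2 : Continuous fun p : (Fin n → ℝ) × (Fin n → ℝ) => ∑ i, p.1 i * p.1 i :=
      continuous_finset_sum _ fun i _ =>
        ((continuous_apply i).comp continuous_fst).mul ((continuous_apply i).comp continuous_fst)
    have c3 : Continuous fun p : (Fin n → ℝ) × (Fin n → ℝ) => ∑ i, p.2 i * p.2 i :=
      continuous_finset_sum _ fun i _ =>
        ((continuous_apply i).comp continuous_snd).mul ((continuous_apply i).comp continuous_snd)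
    exact (((c1.pow 2).div_const _).sub ((c2.mul c3).div_const _)).pow 2
  -- reduce to the product measure
  have hmap : Measure.map (fun ω => (u ω, v ω)) μ = (stdGaussian n).prod (stdGaussian n) := by
    have := (ProbabilityTheory.indepFun_iff_map_prod_eq_prod_map_map
      hu.aemeasurable hv.aemeasurable).mp hindep
    rwa [hud, hvd] at this
  have hred : ∫ ω, (psi n (u ω) (v ω)) ^ 2 ∂μ
      = ∫ p, psi n p.1 p.2 ^ 2 ∂((stdGaussian n).prod (stdGaussian n)) := by
    rw [← hmap, integral_map (hu.prodMk hv).aemeasurable hcont.aestronglyMeasurable]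
  rw [hred]
  -- pointwise expansion of ψ²
  have hpoint : ∀ p : (Fin n → ℝ) × (Fin n → ℝ), psi n p.1 p.2 ^ 2
      = (1/(n:ℝ)^2) * (∑ q : Fin n × Fin n × Fin n × Fin n,
            (p.1 q.1 * p.1 q.2.1 * p.1 q.2.2.1 * p.1 q.2.2.2)
              * (p.2 q.1 * p.2 q.2.1 * p.2 q.2.2.1 * p.2 q.2.2.2))
        - (2/(n:ℝ)^3) * (∑ q : Fin n × Fin n × Fin n × Fin n,
            (p.1 q.1 * p.1 q.2.1 * p.1 q.2.2.1 * p.1 q.2.2.1)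
              * (p.2 q.1 * p.2 q.2.1 * p.2 q.2.2.2 * p.2 q.2.2.2))
        + (1/(n:ℝ)^4) * (∑ q : Fin n × Fin n × Fin n × Fin n,
            (p.1 q.1 * p.1 q.1 * p.1 q.2.1 * p.1 q.2.1)
              * (p.2 q.2.2.1 * p.2 q.2.2.1 * p.2 q.2.2.2 * p.2 q.2.2.2)) := by
    intro p
    rw [expand1, expand2, expand3, psi]
    field_simp
    ring
  simp only [hpoint]
  -- integrability of the three sums
  have hI1 : Integrable (fun p : (Fin n → ℝ) × (Fin n → ℝ) =>
      ∑ q : Fin n × Fin n × Fin n × Fin n,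
        (p.1 q.1 * p.1 q.2.1 * p.1 q.2.2.1 * p.1 q.2.2.2)
          * (p.2 q.1 * p.2 q.2.1 * p.2 q.2.2.1 * p.2 q.2.2.2))
      ((stdGaussian n).prod (stdGaussian n)) :=
    integrable_finset_sum _ fun q _ =>
      (integrable_mono4 q.1 q.2.1 q.2.2.1 q.2.2.2).mul_prod
        (integrable_mono4 q.1 q.2.1 q.2.2.1 q.2.2.2)
  have hI2 : Integrable (fun p : (Fin n → ℝ) × (Fin n → ℝ) =>
      ∑ q : Fin n × Fin n × Fin n × Fin n,
        (p.1 q.1 * p.1 q.2.1 * p.1 q.2.2.1 * p.1 q.2.2.1)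
          * (p.2 q.1 * p.2 q.2.1 * p.2 q.2.2.2 * p.2 q.2.2.2))
      ((stdGaussian n).prod (stdGaussian n)) :=
    integrable_finset_sum _ fun q _ =>
      (integrable_mono4 q.1 q.2.1 q.2.2.1 q.2.2.1).mul_prod
        (integrable_mono4 q.1 q.2.1 q.2.2.2 q.2.2.2)
  have hI3 : Integrable (fun p : (Fin n → ℝ) × (Fin n → ℝ) =>
      ∑ q : Fin n × Fin n × Fin n × Fin n,
        (p.1 q.1 * p.1 q.1 * p.1 q.2.1 * p.1 q.2.1)
          * (p.2 q.2.2.1 * p.2 q.2.2.1 * p.2 q.2.2.2 * p.2 q.2.2.2))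
      ((stdGaussian n).prod (stdGaussian n)) :=
    integrable_finset_sum _ fun q _ =>
      (integrable_mono4 q.1 q.1 q.2.1 q.2.1).mul_prod
        (integrable_mono4 q.2.2.1 q.2.2.1 q.2.2.2 q.2.2.2)
  have hJ1 : Integrable (fun p : (Fin n → ℝ) × (Fin n → ℝ) =>
      (1/(n:ℝ)^2) * (∑ q : Fin n × Fin n × Fin n × Fin n,
        (p.1 q.1 * p.1 q.2.1 * p.1 q.2.2.1 * p.1 q.2.2.2)
          * (p.2 q.1 * p.2 q.2.1 * p.2 q.2.2.1 * p.2 q.2.2.2)))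
      ((stdGaussian n).prod (stdGaussian n)) := hI1.const_mul _
  have hJ2 : Integrable (fun p : (Fin n → ℝ) × (Fin n → ℝ) =>
      (2/(n:ℝ)^3) * (∑ q : Fin n × Fin n × Fin n × Fin n,
        (p.1 q.1 * p.1 q.2.1 * p.1 q.2.2.1 * p.1 q.2.2.1)
          * (p.2 q.1 * p.2 q.2.1 * p.2 q.2.2.2 * p.2 q.2.2.2)))
      ((stdGaussian n).prod (stdGaussian n)) := hI2.const_mul _
  have hJ3 : Integrable (fun p : (Fin n → ℝ) × (Fin n → ℝ) =>
      (1/(n:ℝ)^4) * (∑ q : Fin n × Fin n × Fin n × Fin n,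
        (p.1 q.1 * p.1 q.1 * p.1 q.2.1 * p.1 q.2.1)
          * (p.2 q.2.2.1 * p.2 q.2.2.1 * p.2 q.2.2.2 * p.2 q.2.2.2)))
      ((stdGaussian n).prod (stdGaussian n)) := hI3.const_mul _
  have hJ12 : Integrable (fun p : (Fin n → ℝ) × (Fin n → ℝ) =>
      (1/(n:ℝ)^2) * (∑ q : Fin n × Fin n × Fin n × Fin n,
        (p.1 q.1 * p.1 q.2.1 * p.1 q.2.2.1 * p.1 q.2.2.2)
          * (p.2 q.1 * p.2 q.2.1 * p.2 q.2.2.1 * p.2 q.2.2.2))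
      - (2/(n:ℝ)^3) * (∑ q : Fin n × Fin n × Fin n × Fin n,
        (p.1 q.1 * p.1 q.2.1 * p.1 q.2.2.1 * p.1 q.2.2.1)
          * (p.2 q.1 * p.2 q.2.1 * p.2 q.2.2.2 * p.2 q.2.2.2)))
      ((stdGaussian n).prod (stdGaussian n)) := hJ1.sub hJ2
  rw [integral_add hJ12 hJ3, integral_sub hJ1 hJ2,
    integral_const_mul, integral_const_mul, integral_const_mul, intT1, intT2, intT3]
  field_simp
  ring
end

section
/- Let n, m ≥ 1, let a₁, …, a_m be real numbers, and let u₁, …, u_m, v be independent random vectors in ℝⁿ, each distributed as the standard n-dimensional Gaussian N(0, I_n). Define ψ(x, y) = (xᵀy)²/n − (xᵀx)(yᵀy)/n². Then E[ ( Σ_{i=1}^{m} aᵢ ψ(uᵢ, v) )² ] = (2(n−1)(n+2)/n²) Σ_{i=1}^{m} aᵢ². -/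
open MeasureTheory ProbabilityTheory Filter

open Real
open scoped ENNReal NNReal

lemma integrable_pow_mul_gexp (k : ℕ) :
    Integrable (fun x : ℝ => x ^ k * Real.exp (-(1/2) * x ^ 2)) := by
  have h := integrable_rpow_mul_exp_neg_mul_sq (b := (1:ℝ)/2) (by norm_num) (s := (k:ℝ))
    (by exact_mod_cast neg_one_lt_zero.trans_le (Nat.cast_nonneg k))
  simpa [Real.rpow_natCast] using h

lemma tendsto_pow_mul_gexp_atTop (k : ℕ) :
    Tendsto (fun x : ℝ => x ^ k * Real.exp (-(1/2) * x ^ 2)) atTop (nhds 0) := by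
  have h := rpow_mul_exp_neg_mul_sq_isLittleO_exp_neg (b := (1:ℝ)/2) (by norm_num) (k:ℝ)
  have h2 : (fun x : ℝ => x ^ k * Real.exp (-(1/2) * x ^ 2)) =ᶠ[atTop]
      (fun x : ℝ => x ^ (k:ℝ) * Real.exp (-(1/2) * x ^ 2)) := by
    filter_upwards [eventually_ge_atTop (0:ℝ)] with x hx
    rw [Real.rpow_natCast]
  refine Tendsto.congr' h2.symm ?_
  refine h.isBigO.trans_tendsto ?_
  have h3 : Tendsto (fun x : ℝ => -(1/2) * x) atTop atBot :=
    Tendsto.const_mul_atTop_of_neg (by norm_num) tendsto_id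
  exact Real.tendsto_exp_atBot.comp h3

lemma tendsto_pow_mul_gexp_atBot (k : ℕ) :
    Tendsto (fun x : ℝ => x ^ k * Real.exp (-(1/2) * x ^ 2)) atBot (nhds 0) := by
  have h : Tendsto (fun x : ℝ => (-x) ^ k * Real.exp (-(1/2) * (-x) ^ 2)) atTop (nhds 0) := by
    have := (tendsto_pow_mul_gexp_atTop k).const_mul ((-1:ℝ)^k)
    simp only [mul_zero] at this
    refine this.congr fun x => ?_
    rw [neg_pow, neg_sq]; ring
  have := h.comp tendsto_neg_atBot_atTop
  refine this.congr fun x => ?_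
  simp

lemma hasDerivAt_gexpF (k : ℕ) (x : ℝ) :
    HasDerivAt (fun x : ℝ => -(x ^ (k+1) * Real.exp (-(1/2) * x ^ 2)))
      (x ^ (k+2) * Real.exp (-(1/2) * x ^ 2) - (k+1) * (x ^ k * Real.exp (-(1/2) * x ^ 2))) x := by
  have h1 : HasDerivAt (fun x : ℝ => x ^ (k+1)) ((k+1) * x ^ k) x := by
    simpa using hasDerivAt_pow (k+1) x
  have h2 : HasDerivAt (fun x : ℝ => -(1/2) * x ^ 2) (-(1/2) * (2 * x)) x := by
    simpa using (hasDerivAt_pow 2 x).const_mul (-(1/2) : ℝ)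
  have h3 := (h2.exp)
  have h4 := (h1.mul h3).neg
  exact h4.congr_deriv (by ring)

lemma gexp_int_rec (k : ℕ) :
    ∫ x : ℝ, x ^ (k+2) * Real.exp (-(1/2) * x ^ 2)
      = (k+1) * ∫ x : ℝ, x ^ k * Real.exp (-(1/2) * x ^ 2) := by
  set f' : ℝ → ℝ := fun x => x ^ (k+2) * Real.exp (-(1/2) * x ^ 2)
    - (k+1) * (x ^ k * Real.exp (-(1/2) * x ^ 2)) with hf'
  have hint : Integrable f' := by
    exact (integrable_pow_mul_gexp (k+2)).sub ((integrable_pow_mul_gexp k).const_mul _)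
  have hF0 : -((0:ℝ) ^ (k+1) * Real.exp (-(1/2) * (0:ℝ) ^ 2)) = 0 := by simp
  have hcont : Continuous (fun x : ℝ => -(x ^ (k+1) * Real.exp (-(1/2) * x ^ 2))) := by
    continuity
  have h1 : ∫ x in Set.Ioi (0:ℝ), f' x = 0 - -((0:ℝ) ^ (k+1) * Real.exp (-(1/2) * (0:ℝ) ^ 2)) := by
    refine integral_Ioi_of_hasDerivAt_of_tendsto (hcont.continuousWithinAt)
      (fun x _ => hasDerivAt_gexpF k x) hint.integrableOn ?_
    simpa using (tendsto_pow_mul_gexp_atTop (k+1)).neg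
  have h2 : ∫ x in Set.Iic (0:ℝ), f' x = -((0:ℝ) ^ (k+1) * Real.exp (-(1/2) * (0:ℝ) ^ 2)) - 0 := by
    refine integral_Iic_of_hasDerivAt_of_tendsto (hcont.continuousWithinAt)
      (fun x _ => hasDerivAt_gexpF k x) hint.integrableOn ?_
    simpa using (tendsto_pow_mul_gexp_atBot (k+1)).neg
  have h3 : ∫ x : ℝ, f' x = 0 := by
    rw [← intervalIntegral.integral_Iic_add_Ioi hint.integrableOn hint.integrableOn, h1, h2]
    simp
  rw [hf'] at h3
  rw [integral_sub (integrable_pow_mul_gexp (k+2))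
    ((integrable_pow_mul_gexp k).const_mul _), integral_const_mul, sub_eq_zero] at h3
  rw [h3]

lemma integral_x_mul_gexp_eq_zero :
    ∫ x : ℝ, x * Real.exp (-(1/2) * x ^ 2) = 0 := by
  have hder : ∀ x : ℝ, HasDerivAt (fun x : ℝ => -Real.exp (-(1/2) * x ^ 2))
      (x * Real.exp (-(1/2) * x ^ 2)) x := by
    intro x
    have h2 : HasDerivAt (fun x : ℝ => -(1/2) * x ^ 2) (-(1/2) * (2 * x)) x := by
      simpa using (hasDerivAt_pow 2 x).const_mul (-(1/2) : ℝ)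
    have := h2.exp.neg
    exact this.congr_deriv (by ring)
  have hint : Integrable (fun x : ℝ => x * Real.exp (-(1/2) * x ^ 2)) := by
    simpa using integrable_pow_mul_gexp 1
  have hcont : Continuous (fun x : ℝ => -Real.exp (-(1/2) * x ^ 2)) := by continuity
  have h1 : ∫ x in Set.Ioi (0:ℝ), x * Real.exp (-(1/2) * x ^ 2)
      = 0 - -Real.exp (-(1/2) * (0:ℝ) ^ 2) := by
    refine integral_Ioi_of_hasDerivAt_of_tendsto (hcont.continuousWithinAt)
      (fun x _ => hder x) hint.integrableOn ?_
    simpa using (tendsto_pow_mul_gexp_atTop 0).neg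
  have h2 : ∫ x in Set.Iic (0:ℝ), x * Real.exp (-(1/2) * x ^ 2)
      = -Real.exp (-(1/2) * (0:ℝ) ^ 2) - 0 := by
    refine integral_Iic_of_hasDerivAt_of_tendsto (hcont.continuousWithinAt)
      (fun x _ => hder x) hint.integrableOn ?_
    simpa using (tendsto_pow_mul_gexp_atBot 0).neg
  rw [← intervalIntegral.integral_Iic_add_Ioi hint.integrableOn hint.integrableOn, h1, h2]
  ring

lemma integral_gexp : ∫ x : ℝ, Real.exp (-(1/2) * x ^ 2) = Real.sqrt (2 * Real.pi) := by
  calc ∫ x : ℝ, Real.exp (-(1/2) * x ^ 2) = Real.sqrt (Real.pi / (1/2)) := integral_gaussian (1/2)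
  _ = Real.sqrt (2 * Real.pi) := by norm_num [mul_comm]

lemma gaussianPDFReal_std (x : ℝ) :
    gaussianPDFReal 0 1 x = (Real.sqrt (2 * Real.pi))⁻¹ * Real.exp (-(1/2) * x ^ 2) := by
  rw [gaussianPDFReal]
  simp only [NNReal.coe_one, mul_one, sub_zero]
  congr 1
  ring_nf

lemma integral_stdGauss1 (f : ℝ → ℝ) :
    ∫ x, f x ∂(gaussianReal 0 1)
      = ∫ x, gaussianPDFReal 0 1 x * f x := by
  rw [gaussianReal_of_var_ne_zero 0 one_ne_zero]
  have hmeas : Measurable (fun x => (gaussianPDFReal 0 1 x).toNNReal) :=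
    (measurable_gaussianPDFReal 0 1).real_toNNReal
  have hd : gaussianPDF 0 1 = fun x => ((gaussianPDFReal 0 1 x).toNNReal : ℝ≥0∞) := by
    funext x; rw [gaussianPDF, ENNReal.ofReal]
  rw [hd]
  rw [integral_withDensity_eq_integral_smul hmeas]
  congr 1
  funext x
  rw [NNReal.smul_def, Real.coe_toNNReal _ (gaussianPDFReal_nonneg 0 1 x)]
  rfl

lemma integrable_pow_stdGauss1 (k : ℕ) :
    Integrable (fun x : ℝ => x ^ k) (gaussianReal 0 1) := by
  rw [gaussianReal_of_var_ne_zero 0 one_ne_zero]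
  have hmeas : Measurable (fun x => (gaussianPDFReal 0 1 x).toNNReal) :=
    (measurable_gaussianPDFReal 0 1).real_toNNReal
  have hd : gaussianPDF 0 1 = fun x => ((gaussianPDFReal 0 1 x).toNNReal : ℝ≥0∞) := by
    funext x; rw [gaussianPDF, ENNReal.ofReal]
  rw [hd]
  refine (integrable_withDensity_iff_integrable_smul hmeas).2 ?_
  have : (fun x : ℝ => (gaussianPDFReal 0 1 x).toNNReal • x ^ k)
      = fun x : ℝ => (Real.sqrt (2 * Real.pi))⁻¹ * (x ^ k * Real.exp (-(1/2) * x ^ 2)) := by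
    funext x
    rw [NNReal.smul_def, Real.coe_toNNReal _ (gaussianPDFReal_nonneg 0 1 x)]
    show gaussianPDFReal 0 1 x * x ^ k = _
    rw [gaussianPDFReal_std]; ring
  rw [this]
  exact (integrable_pow_mul_gexp k).const_mul _

lemma integral_pow_stdGauss1 (k : ℕ) :
    ∫ x, x ^ k ∂(gaussianReal 0 1)
      = (Real.sqrt (2 * Real.pi))⁻¹ * ∫ x : ℝ, x ^ k * Real.exp (-(1/2) * x ^ 2) := by
  rw [integral_stdGauss1]
  rw [← integral_const_mul]
  congr 1; funext x; rw [gaussianPDFReal_std]; ring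

lemma sqrt_two_pi_ne : Real.sqrt (2 * Real.pi) ≠ 0 := by
  positivity

lemma gauss1_m1 : ∫ x, x ∂(gaussianReal 0 1) = 0 := by
  have h := integral_pow_stdGauss1 1
  simp only [pow_one] at h
  rw [h, integral_x_mul_gexp_eq_zero, mul_zero]

lemma gauss1_m2 : ∫ x, x ^ 2 ∂(gaussianReal 0 1) = 1 := by
  have h := integral_pow_stdGauss1 2
  have h2 := gexp_int_rec 0
  simp only [pow_zero, one_mul, Nat.cast_zero, zero_add] at h2
  rw [h, h2, integral_gexp]
  field_simp

lemma gauss1_m3 : ∫ x, x ^ 3 ∂(gaussianReal 0 1) = 0 := by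
  have h := integral_pow_stdGauss1 3
  have h2 := gexp_int_rec 1
  simp only [pow_one, Nat.cast_one] at h2
  rw [h, h2, integral_x_mul_gexp_eq_zero, mul_zero, mul_zero]

lemma gauss1_m4 : ∫ x, x ^ 4 ∂(gaussianReal 0 1) = 3 := by
  have h := integral_pow_stdGauss1 4
  have h2 := gexp_int_rec 2
  have h0 := gexp_int_rec 0
  simp only [pow_zero, one_mul, Nat.cast_zero, zero_add, Nat.cast_ofNat] at h2 h0
  rw [h, h2, h0, integral_gexp]
  have := sqrt_two_pi_ne
  field_simp
  ring

instance (n : ℕ) : IsProbabilityMeasure (stdGaussian n) := by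
  unfold _root_.stdGaussian; infer_instance

lemma finconsEquiv_eq (n : ℕ) :
    ⇑(MeasurableEquiv.piFinSuccAbove (fun _ : Fin (n+1) => ℝ) 0).symm
      = fun p : ℝ × (Fin n → ℝ) => Fin.cons p.1 p.2 := by
  funext p
  simp only [MeasurableEquiv.piFinSuccAbove, MeasurableEquiv.symm_mk,
    MeasurableEquiv.coe_mk, Equiv.symm_symm, Fin.insertNthEquiv, Equiv.coe_fn_mk,
    Fin.insertNth_zero']

lemma measurable_fincons (n : ℕ) :
    Measurable (fun p : ℝ × (Fin n → ℝ) => Fin.cons p.1 p.2 : _ → Fin (n+1) → ℝ) := by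
  rw [← finconsEquiv_eq]
  exact (MeasurableEquiv.piFinSuccAbove (fun _ : Fin (n+1) => ℝ) 0).symm.measurable

lemma stdGaussian_succ (n : ℕ) :
    stdGaussian (n + 1)
      = Measure.map (fun p : ℝ × (Fin n → ℝ) => Fin.cons p.1 p.2)
        ((gaussianReal 0 1).prod (stdGaussian n)) := by
  have h := (measurePreserving_piFinSuccAbove (fun _ : Fin (n+1) => gaussianReal 0 1) 0).symm
  rw [_root_.stdGaussian, ← h.map_eq, finconsEquiv_eq]
  rfl

lemma integral_stdGaussian_succ (n : ℕ) (f : (Fin (n+1) → ℝ) → ℝ)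
    (hf : AEStronglyMeasurable f (stdGaussian (n+1))) :
    ∫ x, f x ∂(stdGaussian (n+1))
      = ∫ p : ℝ × (Fin n → ℝ), f (Fin.cons p.1 p.2) ∂((gaussianReal 0 1).prod (stdGaussian n)) := by
  rw [stdGaussian_succ n,
    integral_map (measurable_fincons n).aemeasurable (by rwa [← stdGaussian_succ])]

lemma integrable_stdGaussian_succ (n : ℕ) (f : (Fin (n+1) → ℝ) → ℝ) :
    Integrable f (stdGaussian (n+1))
      ↔ Integrable (fun p : ℝ × (Fin n → ℝ) => f (Fin.cons p.1 p.2))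
        ((gaussianReal 0 1).prod (stdGaussian n)) := by
  have h := (measurePreserving_piFinSuccAbove (fun _ : Fin (n+1) => gaussianReal 0 1) 0).symm
  have := h.integrable_comp_emb
    (MeasurableEquiv.piFinSuccAbove (fun _ : Fin (n+1) => ℝ) 0).symm.measurableEmbedding
    (g := f)
  rw [finconsEquiv_eq] at this
  exact this.symm

lemma integrable_SQ (n : ℕ) (y : Fin n → ℝ) (k l : ℕ) :
    Integrable (fun x : Fin n → ℝ =>
      (∑ i, y i * x i) ^ k * (∑ i, x i * x i) ^ l) (stdGaussian n) := by
  induction n generalizing k l with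
  | zero =>
      simp only [Finset.univ_eq_empty, Finset.sum_empty]
      exact integrable_const _
  | succ n ih =>
      rw [integrable_stdGaussian_succ]
      simp only [Fin.sum_univ_succ, Fin.cons_zero, Fin.cons_succ]
      have hexp : ∀ p : ℝ × (Fin n → ℝ),
          (y 0 * p.1 + ∑ i, y i.succ * p.2 i) ^ k * (p.1 * p.1 + ∑ i, p.2 i * p.2 i) ^ l
          = ∑ j ∈ Finset.range (k+1), ∑ m ∈ Finset.range (l+1),
            ((y 0 * p.1) ^ j * (∑ i, y i.succ * p.2 i) ^ (k - j) * (k.choose j : ℝ))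
            * ((p.1 * p.1) ^ m * (∑ i, p.2 i * p.2 i) ^ (l - m) * (l.choose m : ℝ)) := by
        intro p
        rw [add_pow, add_pow, Finset.sum_mul_sum]
      rw [show (fun p : ℝ × (Fin n → ℝ) =>
          (y 0 * p.1 + ∑ i, y i.succ * p.2 i) ^ k * (p.1 * p.1 + ∑ i, p.2 i * p.2 i) ^ l)
          = fun p => ∑ j ∈ Finset.range (k+1), ∑ m ∈ Finset.range (l+1),
            ((y 0 * p.1) ^ j * (∑ i, y i.succ * p.2 i) ^ (k - j) * (k.choose j : ℝ))
            * ((p.1 * p.1) ^ m * (∑ i, p.2 i * p.2 i) ^ (l - m) * (l.choose m : ℝ))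
        from funext hexp]
      refine integrable_finset_sum _ fun j _ => integrable_finset_sum _ fun m _ => ?_
      have hbase := ((integrable_pow_stdGauss1 (j + 2*m)).const_mul
        (y 0 ^ j * (k.choose j : ℝ) * (l.choose m : ℝ))).mul_prod
        (ih (fun i => y i.succ) (k - j) (l - m))
      refine hbase.congr (Filter.Eventually.of_forall fun p => ?_)
      ring

lemma gauss1_p0 : ∫ x, x ^ 0 ∂(gaussianReal 0 1) = 1 := by simp
lemma gauss1_p1 : ∫ x, x ^ 1 ∂(gaussianReal 0 1) = 0 := by simpa using gauss1_m1
lemma gauss1_p2 : ∫ x, x ^ 2 ∂(gaussianReal 0 1) = 1 := gauss1_m2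
lemma gauss1_p3 : ∫ x, x ^ 3 ∂(gaussianReal 0 1) = 0 := gauss1_m3
lemma gauss1_p4 : ∫ x, x ^ 4 ∂(gaussianReal 0 1) = 3 := gauss1_m4

lemma meas_SQ (n : ℕ) (y : Fin n → ℝ) (k l : ℕ) :
    Measurable (fun x : Fin n → ℝ => (∑ i, y i * x i) ^ k * (∑ i, x i * x i) ^ l) := by
  refine Measurable.mul ?_ ?_ <;>
  exact (Finset.measurable_sum _ fun i _ => by fun_prop).pow_const _

lemma int_term (n : ℕ) (y : Fin n → ℝ) (c : ℝ) (a b d : ℕ) :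
    Integrable (fun p : ℝ × (Fin n → ℝ) =>
      (c * p.1 ^ a) * ((∑ i, y i * p.2 i) ^ b * (∑ i, p.2 i * p.2 i) ^ d))
      ((gaussianReal 0 1).prod (stdGaussian n)) :=
  ((integrable_pow_stdGauss1 a).const_mul c).mul_prod (integrable_SQ n y b d)

lemma val_term (n : ℕ) (y : Fin n → ℝ) (c : ℝ) (a b d : ℕ) :
    ∫ p : ℝ × (Fin n → ℝ), (c * p.1 ^ a) * ((∑ i, y i * p.2 i) ^ b * (∑ i, p.2 i * p.2 i) ^ d)
      ∂((gaussianReal 0 1).prod (stdGaussian n))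
    = c * ((∫ t, t ^ a ∂(gaussianReal 0 1)) *
        ∫ x, (∑ i, y i * x i) ^ b * (∑ i, x i * x i) ^ d ∂(stdGaussian n)) := by
  have h := integral_prod_mul (μ := gaussianReal 0 1) (ν := stdGaussian n)
    (f := fun t : ℝ => c * t ^ a)
    (g := fun x : Fin n → ℝ => (∑ i, y i * x i) ^ b * (∑ i, x i * x i) ^ d)
  rw [h, integral_const_mul, mul_assoc]

lemma mom00 (n : ℕ) (y : Fin n → ℝ) :
    ∫ x, (∑ i, y i * x i) ^ 0 * (∑ i, x i * x i) ^ 0 ∂(stdGaussian n) = 1 := by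
  simp

lemma mom10 (n : ℕ) (y : Fin n → ℝ) :
    ∫ x, (∑ i, y i * x i) ^ 1 * (∑ i, x i * x i) ^ 0 ∂(stdGaussian n) = 0 := by
  induction n with
  | zero => simp
  | succ n ih =>
      rw [integral_stdGaussian_succ _ _ ((meas_SQ _ _ _ _).aestronglyMeasurable)]
      simp only [Fin.sum_univ_succ, Fin.cons_zero, Fin.cons_succ]
      have hpt : (fun p : ℝ × (Fin n → ℝ) =>
          (y 0 * p.1 + ∑ i, y i.succ * p.2 i) ^ 1
            * (p.1 * p.1 + ∑ i, p.2 i * p.2 i) ^ 0)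
          = (fun p : ℝ × (Fin n → ℝ) =>
              ((y 0) * p.1 ^ 1) * ((∑ i, y i.succ * p.2 i) ^ 0 * (∑ i, p.2 i * p.2 i) ^ 0)
              + ((1) * p.1 ^ 0) * ((∑ i, y i.succ * p.2 i) ^ 1 * (∑ i, p.2 i * p.2 i) ^ 0)) := by
        funext p
        ring
      have I1 := int_term n (fun i => y i.succ) (y 0) 1 0 0
      have I2 := int_term n (fun i => y i.succ) (1) 0 1 0
      rw [hpt, integral_add I1 I2]
      simp only [val_term, gauss1_p0, gauss1_p1, gauss1_p2, gauss1_p3, gauss1_p4,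
        ih, mom00]
      try push_cast
      try ring

lemma mom20 (n : ℕ) (y : Fin n → ℝ) :
    ∫ x, (∑ i, y i * x i) ^ 2 * (∑ i, x i * x i) ^ 0 ∂(stdGaussian n) = ∑ i, y i * y i := by
  induction n with
  | zero => simp
  | succ n ih =>
      rw [integral_stdGaussian_succ _ _ ((meas_SQ _ _ _ _).aestronglyMeasurable)]
      simp only [Fin.sum_univ_succ, Fin.cons_zero, Fin.cons_succ]
      have hpt : (fun p : ℝ × (Fin n → ℝ) =>
          (y 0 * p.1 + ∑ i, y i.succ * p.2 i) ^ 2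
            * (p.1 * p.1 + ∑ i, p.2 i * p.2 i) ^ 0)
          = (fun p : ℝ × (Fin n → ℝ) =>
              ((y 0 ^ 2) * p.1 ^ 2) * ((∑ i, y i.succ * p.2 i) ^ 0 * (∑ i, p.2 i * p.2 i) ^ 0)
              + ((2 * y 0) * p.1 ^ 1) * ((∑ i, y i.succ * p.2 i) ^ 1 * (∑ i, p.2 i * p.2 i) ^ 0)
              + ((1) * p.1 ^ 0) * ((∑ i, y i.succ * p.2 i) ^ 2 * (∑ i, p.2 i * p.2 i) ^ 0)) := by
        funext p
        ring
      have I1 := int_term n (fun i => y i.succ) (y 0 ^ 2) 2 0 0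
      have I2 := int_term n (fun i => y i.succ) (2 * y 0) 1 1 0
      have I3 := int_term n (fun i => y i.succ) (1) 0 2 0
      have H2 : Integrable (fun p : ℝ × (Fin n → ℝ) =>
          ((y 0 ^ 2) * p.1 ^ 2) * ((∑ i, y i.succ * p.2 i) ^ 0 * (∑ i, p.2 i * p.2 i) ^ 0)
          + ((2 * y 0) * p.1 ^ 1) * ((∑ i, y i.succ * p.2 i) ^ 1 * (∑ i, p.2 i * p.2 i) ^ 0))
          ((gaussianReal 0 1).prod (stdGaussian n)) := I1.add I2
      rw [hpt, integral_add H2 I3, integral_add I1 I2]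
      simp only [val_term, gauss1_p0, gauss1_p1, gauss1_p2, gauss1_p3, gauss1_p4,
        ih, mom00, mom10]
      try push_cast
      try ring

lemma mom30 (n : ℕ) (y : Fin n → ℝ) :
    ∫ x, (∑ i, y i * x i) ^ 3 * (∑ i, x i * x i) ^ 0 ∂(stdGaussian n) = 0 := by
  induction n with
  | zero => simp
  | succ n ih =>
      rw [integral_stdGaussian_succ _ _ ((meas_SQ _ _ _ _).aestronglyMeasurable)]
      simp only [Fin.sum_univ_succ, Fin.cons_zero, Fin.cons_succ]
      have hpt : (fun p : ℝ × (Fin n → ℝ) =>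
          (y 0 * p.1 + ∑ i, y i.succ * p.2 i) ^ 3
            * (p.1 * p.1 + ∑ i, p.2 i * p.2 i) ^ 0)
          = (fun p : ℝ × (Fin n → ℝ) =>
              ((y 0 ^ 3) * p.1 ^ 3) * ((∑ i, y i.succ * p.2 i) ^ 0 * (∑ i, p.2 i * p.2 i) ^ 0)
              + ((3 * y 0 ^ 2) * p.1 ^ 2) * ((∑ i, y i.succ * p.2 i) ^ 1 * (∑ i, p.2 i * p.2 i) ^ 0)
              + ((3 * y 0) * p.1 ^ 1) * ((∑ i, y i.succ * p.2 i) ^ 2 * (∑ i, p.2 i * p.2 i) ^ 0)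
              + ((1) * p.1 ^ 0) * ((∑ i, y i.succ * p.2 i) ^ 3 * (∑ i, p.2 i * p.2 i) ^ 0)) := by
        funext p
        ring
      have I1 := int_term n (fun i => y i.succ) (y 0 ^ 3) 3 0 0
      have I2 := int_term n (fun i => y i.succ) (3 * y 0 ^ 2) 2 1 0
      have I3 := int_term n (fun i => y i.succ) (3 * y 0) 1 2 0
      have I4 := int_term n (fun i => y i.succ) (1) 0 3 0
      have H2 : Integrable (fun p : ℝ × (Fin n → ℝ) =>
          ((y 0 ^ 3) * p.1 ^ 3) * ((∑ i, y i.succ * p.2 i) ^ 0 * (∑ i, p.2 i * p.2 i) ^ 0)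
          + ((3 * y 0 ^ 2) * p.1 ^ 2) * ((∑ i, y i.succ * p.2 i) ^ 1 * (∑ i, p.2 i * p.2 i) ^ 0))
          ((gaussianReal 0 1).prod (stdGaussian n)) := I1.add I2
      have H3 : Integrable (fun p : ℝ × (Fin n → ℝ) =>
          ((y 0 ^ 3) * p.1 ^ 3) * ((∑ i, y i.succ * p.2 i) ^ 0 * (∑ i, p.2 i * p.2 i) ^ 0)
          + ((3 * y 0 ^ 2) * p.1 ^ 2) * ((∑ i, y i.succ * p.2 i) ^ 1 * (∑ i, p.2 i * p.2 i) ^ 0)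
          + ((3 * y 0) * p.1 ^ 1) * ((∑ i, y i.succ * p.2 i) ^ 2 * (∑ i, p.2 i * p.2 i) ^ 0))
          ((gaussianReal 0 1).prod (stdGaussian n)) := H2.add I3
      rw [hpt, integral_add H3 I4, integral_add H2 I3, integral_add I1 I2]
      simp only [val_term, gauss1_p0, gauss1_p1, gauss1_p2, gauss1_p3, gauss1_p4,
        ih, mom00, mom10, mom20]
      try push_cast
      try ring

lemma mom40 (n : ℕ) (y : Fin n → ℝ) :
    ∫ x, (∑ i, y i * x i) ^ 4 * (∑ i, x i * x i) ^ 0 ∂(stdGaussian n) = 3 * (∑ i, y i * y i) ^ 2 := by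
  induction n with
  | zero => simp
  | succ n ih =>
      rw [integral_stdGaussian_succ _ _ ((meas_SQ _ _ _ _).aestronglyMeasurable)]
      simp only [Fin.sum_univ_succ, Fin.cons_zero, Fin.cons_succ]
      have hpt : (fun p : ℝ × (Fin n → ℝ) =>
          (y 0 * p.1 + ∑ i, y i.succ * p.2 i) ^ 4
            * (p.1 * p.1 + ∑ i, p.2 i * p.2 i) ^ 0)
          = (fun p : ℝ × (Fin n → ℝ) =>
              ((y 0 ^ 4) * p.1 ^ 4) * ((∑ i, y i.succ * p.2 i) ^ 0 * (∑ i, p.2 i * p.2 i) ^ 0)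
              + ((4 * y 0 ^ 3) * p.1 ^ 3) * ((∑ i, y i.succ * p.2 i) ^ 1 * (∑ i, p.2 i * p.2 i) ^ 0)
              + ((6 * y 0 ^ 2) * p.1 ^ 2) * ((∑ i, y i.succ * p.2 i) ^ 2 * (∑ i, p.2 i * p.2 i) ^ 0)
              + ((4 * y 0) * p.1 ^ 1) * ((∑ i, y i.succ * p.2 i) ^ 3 * (∑ i, p.2 i * p.2 i) ^ 0)
              + ((1) * p.1 ^ 0) * ((∑ i, y i.succ * p.2 i) ^ 4 * (∑ i, p.2 i * p.2 i) ^ 0)) := by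
        funext p
        ring
      have I1 := int_term n (fun i => y i.succ) (y 0 ^ 4) 4 0 0
      have I2 := int_term n (fun i => y i.succ) (4 * y 0 ^ 3) 3 1 0
      have I3 := int_term n (fun i => y i.succ) (6 * y 0 ^ 2) 2 2 0
      have I4 := int_term n (fun i => y i.succ) (4 * y 0) 1 3 0
      have I5 := int_term n (fun i => y i.succ) (1) 0 4 0
      have H2 : Integrable (fun p : ℝ × (Fin n → ℝ) =>
          ((y 0 ^ 4) * p.1 ^ 4) * ((∑ i, y i.succ * p.2 i) ^ 0 * (∑ i, p.2 i * p.2 i) ^ 0)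
          + ((4 * y 0 ^ 3) * p.1 ^ 3) * ((∑ i, y i.succ * p.2 i) ^ 1 * (∑ i, p.2 i * p.2 i) ^ 0))
          ((gaussianReal 0 1).prod (stdGaussian n)) := I1.add I2
      have H3 : Integrable (fun p : ℝ × (Fin n → ℝ) =>
          ((y 0 ^ 4) * p.1 ^ 4) * ((∑ i, y i.succ * p.2 i) ^ 0 * (∑ i, p.2 i * p.2 i) ^ 0)
          + ((4 * y 0 ^ 3) * p.1 ^ 3) * ((∑ i, y i.succ * p.2 i) ^ 1 * (∑ i, p.2 i * p.2 i) ^ 0)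
          + ((6 * y 0 ^ 2) * p.1 ^ 2) * ((∑ i, y i.succ * p.2 i) ^ 2 * (∑ i, p.2 i * p.2 i) ^ 0))
          ((gaussianReal 0 1).prod (stdGaussian n)) := H2.add I3
      have H4 : Integrable (fun p : ℝ × (Fin n → ℝ) =>
          ((y 0 ^ 4) * p.1 ^ 4) * ((∑ i, y i.succ * p.2 i) ^ 0 * (∑ i, p.2 i * p.2 i) ^ 0)
          + ((4 * y 0 ^ 3) * p.1 ^ 3) * ((∑ i, y i.succ * p.2 i) ^ 1 * (∑ i, p.2 i * p.2 i) ^ 0)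
          + ((6 * y 0 ^ 2) * p.1 ^ 2) * ((∑ i, y i.succ * p.2 i) ^ 2 * (∑ i, p.2 i * p.2 i) ^ 0)
          + ((4 * y 0) * p.1 ^ 1) * ((∑ i, y i.succ * p.2 i) ^ 3 * (∑ i, p.2 i * p.2 i) ^ 0))
          ((gaussianReal 0 1).prod (stdGaussian n)) := H3.add I4
      rw [hpt, integral_add H4 I5, integral_add H3 I4, integral_add H2 I3, integral_add I1 I2]
      simp only [val_term, gauss1_p0, gauss1_p1, gauss1_p2, gauss1_p3, gauss1_p4,
        ih, mom00, mom10, mom20, mom30]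
      try push_cast
      try ring

lemma mom01 (n : ℕ) (y : Fin n → ℝ) :
    ∫ x, (∑ i, y i * x i) ^ 0 * (∑ i, x i * x i) ^ 1 ∂(stdGaussian n) = (n : ℝ) := by
  induction n with
  | zero => simp
  | succ n ih =>
      rw [integral_stdGaussian_succ _ _ ((meas_SQ _ _ _ _).aestronglyMeasurable)]
      simp only [Fin.sum_univ_succ, Fin.cons_zero, Fin.cons_succ]
      have hpt : (fun p : ℝ × (Fin n → ℝ) =>
          (y 0 * p.1 + ∑ i, y i.succ * p.2 i) ^ 0
            * (p.1 * p.1 + ∑ i, p.2 i * p.2 i) ^ 1)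
          = (fun p : ℝ × (Fin n → ℝ) =>
              ((1) * p.1 ^ 2) * ((∑ i, y i.succ * p.2 i) ^ 0 * (∑ i, p.2 i * p.2 i) ^ 0)
              + ((1) * p.1 ^ 0) * ((∑ i, y i.succ * p.2 i) ^ 0 * (∑ i, p.2 i * p.2 i) ^ 1)) := by
        funext p
        ring
      have I1 := int_term n (fun i => y i.succ) (1) 2 0 0
      have I2 := int_term n (fun i => y i.succ) (1) 0 0 1
      rw [hpt, integral_add I1 I2]
      simp only [val_term, gauss1_p0, gauss1_p1, gauss1_p2, gauss1_p3, gauss1_p4,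
        ih, mom00]
      try push_cast
      try ring

lemma mom02 (n : ℕ) (y : Fin n → ℝ) :
    ∫ x, (∑ i, y i * x i) ^ 0 * (∑ i, x i * x i) ^ 2 ∂(stdGaussian n) = (n : ℝ) ^ 2 + 2 * n := by
  induction n with
  | zero => simp
  | succ n ih =>
      rw [integral_stdGaussian_succ _ _ ((meas_SQ _ _ _ _).aestronglyMeasurable)]
      simp only [Fin.sum_univ_succ, Fin.cons_zero, Fin.cons_succ]
      have hpt : (fun p : ℝ × (Fin n → ℝ) =>
          (y 0 * p.1 + ∑ i, y i.succ * p.2 i) ^ 0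
            * (p.1 * p.1 + ∑ i, p.2 i * p.2 i) ^ 2)
          = (fun p : ℝ × (Fin n → ℝ) =>
              ((1) * p.1 ^ 4) * ((∑ i, y i.succ * p.2 i) ^ 0 * (∑ i, p.2 i * p.2 i) ^ 0)
              + ((2) * p.1 ^ 2) * ((∑ i, y i.succ * p.2 i) ^ 0 * (∑ i, p.2 i * p.2 i) ^ 1)
              + ((1) * p.1 ^ 0) * ((∑ i, y i.succ * p.2 i) ^ 0 * (∑ i, p.2 i * p.2 i) ^ 2)) := by
        funext p
        ring
      have I1 := int_term n (fun i => y i.succ) (1) 4 0 0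
      have I2 := int_term n (fun i => y i.succ) (2) 2 0 1
      have I3 := int_term n (fun i => y i.succ) (1) 0 0 2
      have H2 : Integrable (fun p : ℝ × (Fin n → ℝ) =>
          ((1) * p.1 ^ 4) * ((∑ i, y i.succ * p.2 i) ^ 0 * (∑ i, p.2 i * p.2 i) ^ 0)
          + ((2) * p.1 ^ 2) * ((∑ i, y i.succ * p.2 i) ^ 0 * (∑ i, p.2 i * p.2 i) ^ 1))
          ((gaussianReal 0 1).prod (stdGaussian n)) := I1.add I2
      rw [hpt, integral_add H2 I3, integral_add I1 I2]
      simp only [val_term, gauss1_p0, gauss1_p1, gauss1_p2, gauss1_p3, gauss1_p4,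
        ih, mom00, mom01]
      try push_cast
      try ring

lemma mom11 (n : ℕ) (y : Fin n → ℝ) :
    ∫ x, (∑ i, y i * x i) ^ 1 * (∑ i, x i * x i) ^ 1 ∂(stdGaussian n) = 0 := by
  induction n with
  | zero => simp
  | succ n ih =>
      rw [integral_stdGaussian_succ _ _ ((meas_SQ _ _ _ _).aestronglyMeasurable)]
      simp only [Fin.sum_univ_succ, Fin.cons_zero, Fin.cons_succ]
      have hpt : (fun p : ℝ × (Fin n → ℝ) =>
          (y 0 * p.1 + ∑ i, y i.succ * p.2 i) ^ 1
            * (p.1 * p.1 + ∑ i, p.2 i * p.2 i) ^ 1)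
          = (fun p : ℝ × (Fin n → ℝ) =>
              ((y 0) * p.1 ^ 3) * ((∑ i, y i.succ * p.2 i) ^ 0 * (∑ i, p.2 i * p.2 i) ^ 0)
              + ((y 0) * p.1 ^ 1) * ((∑ i, y i.succ * p.2 i) ^ 0 * (∑ i, p.2 i * p.2 i) ^ 1)
              + ((1) * p.1 ^ 2) * ((∑ i, y i.succ * p.2 i) ^ 1 * (∑ i, p.2 i * p.2 i) ^ 0)
              + ((1) * p.1 ^ 0) * ((∑ i, y i.succ * p.2 i) ^ 1 * (∑ i, p.2 i * p.2 i) ^ 1)) := by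
        funext p
        ring
      have I1 := int_term n (fun i => y i.succ) (y 0) 3 0 0
      have I2 := int_term n (fun i => y i.succ) (y 0) 1 0 1
      have I3 := int_term n (fun i => y i.succ) (1) 2 1 0
      have I4 := int_term n (fun i => y i.succ) (1) 0 1 1
      have H2 : Integrable (fun p : ℝ × (Fin n → ℝ) =>
          ((y 0) * p.1 ^ 3) * ((∑ i, y i.succ * p.2 i) ^ 0 * (∑ i, p.2 i * p.2 i) ^ 0)
          + ((y 0) * p.1 ^ 1) * ((∑ i, y i.succ * p.2 i) ^ 0 * (∑ i, p.2 i * p.2 i) ^ 1))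
          ((gaussianReal 0 1).prod (stdGaussian n)) := I1.add I2
      have H3 : Integrable (fun p : ℝ × (Fin n → ℝ) =>
          ((y 0) * p.1 ^ 3) * ((∑ i, y i.succ * p.2 i) ^ 0 * (∑ i, p.2 i * p.2 i) ^ 0)
          + ((y 0) * p.1 ^ 1) * ((∑ i, y i.succ * p.2 i) ^ 0 * (∑ i, p.2 i * p.2 i) ^ 1)
          + ((1) * p.1 ^ 2) * ((∑ i, y i.succ * p.2 i) ^ 1 * (∑ i, p.2 i * p.2 i) ^ 0))
          ((gaussianReal 0 1).prod (stdGaussian n)) := H2.add I3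
      rw [hpt, integral_add H3 I4, integral_add H2 I3, integral_add I1 I2]
      simp only [val_term, gauss1_p0, gauss1_p1, gauss1_p2, gauss1_p3, gauss1_p4,
        ih, mom00, mom01, mom10]
      try push_cast
      try ring

lemma mom21 (n : ℕ) (y : Fin n → ℝ) :
    ∫ x, (∑ i, y i * x i) ^ 2 * (∑ i, x i * x i) ^ 1 ∂(stdGaussian n) = ((n : ℝ) + 2) * ∑ i, y i * y i := by
  induction n with
  | zero => simp
  | succ n ih =>
      rw [integral_stdGaussian_succ _ _ ((meas_SQ _ _ _ _).aestronglyMeasurable)]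
      simp only [Fin.sum_univ_succ, Fin.cons_zero, Fin.cons_succ]
      have hpt : (fun p : ℝ × (Fin n → ℝ) =>
          (y 0 * p.1 + ∑ i, y i.succ * p.2 i) ^ 2
            * (p.1 * p.1 + ∑ i, p.2 i * p.2 i) ^ 1)
          = (fun p : ℝ × (Fin n → ℝ) =>
              ((y 0 ^ 2) * p.1 ^ 4) * ((∑ i, y i.succ * p.2 i) ^ 0 * (∑ i, p.2 i * p.2 i) ^ 0)
              + ((2 * y 0) * p.1 ^ 3) * ((∑ i, y i.succ * p.2 i) ^ 1 * (∑ i, p.2 i * p.2 i) ^ 0)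
              + ((1) * p.1 ^ 2) * ((∑ i, y i.succ * p.2 i) ^ 2 * (∑ i, p.2 i * p.2 i) ^ 0)
              + ((y 0 ^ 2) * p.1 ^ 2) * ((∑ i, y i.succ * p.2 i) ^ 0 * (∑ i, p.2 i * p.2 i) ^ 1)
              + ((2 * y 0) * p.1 ^ 1) * ((∑ i, y i.succ * p.2 i) ^ 1 * (∑ i, p.2 i * p.2 i) ^ 1)
              + ((1) * p.1 ^ 0) * ((∑ i, y i.succ * p.2 i) ^ 2 * (∑ i, p.2 i * p.2 i) ^ 1)) := by
        funext p
        ring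
      have I1 := int_term n (fun i => y i.succ) (y 0 ^ 2) 4 0 0
      have I2 := int_term n (fun i => y i.succ) (2 * y 0) 3 1 0
      have I3 := int_term n (fun i => y i.succ) (1) 2 2 0
      have I4 := int_term n (fun i => y i.succ) (y 0 ^ 2) 2 0 1
      have I5 := int_term n (fun i => y i.succ) (2 * y 0) 1 1 1
      have I6 := int_term n (fun i => y i.succ) (1) 0 2 1
      have H2 : Integrable (fun p : ℝ × (Fin n → ℝ) =>
          ((y 0 ^ 2) * p.1 ^ 4) * ((∑ i, y i.succ * p.2 i) ^ 0 * (∑ i, p.2 i * p.2 i) ^ 0)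
          + ((2 * y 0) * p.1 ^ 3) * ((∑ i, y i.succ * p.2 i) ^ 1 * (∑ i, p.2 i * p.2 i) ^ 0))
          ((gaussianReal 0 1).prod (stdGaussian n)) := I1.add I2
      have H3 : Integrable (fun p : ℝ × (Fin n → ℝ) =>
          ((y 0 ^ 2) * p.1 ^ 4) * ((∑ i, y i.succ * p.2 i) ^ 0 * (∑ i, p.2 i * p.2 i) ^ 0)
          + ((2 * y 0) * p.1 ^ 3) * ((∑ i, y i.succ * p.2 i) ^ 1 * (∑ i, p.2 i * p.2 i) ^ 0)
          + ((1) * p.1 ^ 2) * ((∑ i, y i.succ * p.2 i) ^ 2 * (∑ i, p.2 i * p.2 i) ^ 0))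
          ((gaussianReal 0 1).prod (stdGaussian n)) := H2.add I3
      have H4 : Integrable (fun p : ℝ × (Fin n → ℝ) =>
          ((y 0 ^ 2) * p.1 ^ 4) * ((∑ i, y i.succ * p.2 i) ^ 0 * (∑ i, p.2 i * p.2 i) ^ 0)
          + ((2 * y 0) * p.1 ^ 3) * ((∑ i, y i.succ * p.2 i) ^ 1 * (∑ i, p.2 i * p.2 i) ^ 0)
          + ((1) * p.1 ^ 2) * ((∑ i, y i.succ * p.2 i) ^ 2 * (∑ i, p.2 i * p.2 i) ^ 0)
          + ((y 0 ^ 2) * p.1 ^ 2) * ((∑ i, y i.succ * p.2 i) ^ 0 * (∑ i, p.2 i * p.2 i) ^ 1))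
          ((gaussianReal 0 1).prod (stdGaussian n)) := H3.add I4
      have H5 : Integrable (fun p : ℝ × (Fin n → ℝ) =>
          ((y 0 ^ 2) * p.1 ^ 4) * ((∑ i, y i.succ * p.2 i) ^ 0 * (∑ i, p.2 i * p.2 i) ^ 0)
          + ((2 * y 0) * p.1 ^ 3) * ((∑ i, y i.succ * p.2 i) ^ 1 * (∑ i, p.2 i * p.2 i) ^ 0)
          + ((1) * p.1 ^ 2) * ((∑ i, y i.succ * p.2 i) ^ 2 * (∑ i, p.2 i * p.2 i) ^ 0)
          + ((y 0 ^ 2) * p.1 ^ 2) * ((∑ i, y i.succ * p.2 i) ^ 0 * (∑ i, p.2 i * p.2 i) ^ 1)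
          + ((2 * y 0) * p.1 ^ 1) * ((∑ i, y i.succ * p.2 i) ^ 1 * (∑ i, p.2 i * p.2 i) ^ 1))
          ((gaussianReal 0 1).prod (stdGaussian n)) := H4.add I5
      rw [hpt, integral_add H5 I6, integral_add H4 I5, integral_add H3 I4, integral_add H2 I3, integral_add I1 I2]
      simp only [val_term, gauss1_p0, gauss1_p1, gauss1_p2, gauss1_p3, gauss1_p4,
        ih, mom00, mom01, mom10, mom20, mom11]
      try push_cast
      try ring

lemma meas_psi (n : ℕ) :
    Measurable (fun p : (Fin n → ℝ) × (Fin n → ℝ) => psi n p.1 p.2) := by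
  unfold psi
  have h1 : Measurable fun p : (Fin n → ℝ) × (Fin n → ℝ) => ∑ i, p.1 i * p.2 i :=
    Finset.measurable_sum _ fun i _ => by fun_prop
  have h2 : Measurable fun p : (Fin n → ℝ) × (Fin n → ℝ) => ∑ i, p.1 i * p.1 i :=
    Finset.measurable_sum _ fun i _ => by fun_prop
  have h3 : Measurable fun p : (Fin n → ℝ) × (Fin n → ℝ) => ∑ i, p.2 i * p.2 i :=
    Finset.measurable_sum _ fun i _ => by fun_prop
  exact ((h1.pow_const 2).div_const _).sub ((h2.mul h3).div_const _)

lemma psi_mean (n : ℕ) (hn : 1 ≤ n) (z : Fin n → ℝ) :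
    ∫ x, psi n x z ∂(stdGaussian n) = 0 := by
  have hn' : (n : ℝ) ≠ 0 := Nat.cast_ne_zero.2 (by omega)
  have hpt : (fun x : Fin n → ℝ => psi n x z) = fun x =>
      ((∑ i, z i * x i) ^ 2 * (∑ i, x i * x i) ^ 0) * (1 / (n : ℝ))
      - ((∑ i, z i * x i) ^ 0 * (∑ i, x i * x i) ^ 1) * ((∑ i, z i * z i) / (n : ℝ) ^ 2) := by
    funext x
    have hswap : (∑ i, x i * z i) = ∑ i, z i * x i :=
      Finset.sum_congr rfl fun i _ => mul_comm _ _
    unfold psi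
    rw [hswap]
    ring
  rw [hpt, integral_sub ((integrable_SQ n z 2 0).mul_const _)
    ((integrable_SQ n z 0 1).mul_const _), integral_mul_const, integral_mul_const,
    mom20, mom01]
  field_simp
  ring

lemma psi_sq (n : ℕ) (hn : 1 ≤ n) (z : Fin n → ℝ) :
    ∫ x, psi n x z ^ 2 ∂(stdGaussian n)
      = (2 * ((n : ℝ) - 1) / (n : ℝ) ^ 3) * (∑ i, z i * z i) ^ 2 := by
  have hn' : (n : ℝ) ≠ 0 := Nat.cast_ne_zero.2 (by omega)
  have hpt : (fun x : Fin n → ℝ => psi n x z ^ 2) = fun x =>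
      (((∑ i, z i * x i) ^ 4 * (∑ i, x i * x i) ^ 0) * (1 / (n : ℝ) ^ 2)
      - ((∑ i, z i * x i) ^ 2 * (∑ i, x i * x i) ^ 1) * (2 * (∑ i, z i * z i) / (n : ℝ) ^ 3))
      + ((∑ i, z i * x i) ^ 0 * (∑ i, x i * x i) ^ 2) * ((∑ i, z i * z i) ^ 2 / (n : ℝ) ^ 4) := by
    funext x
    have hswap : (∑ i, x i * z i) = ∑ i, z i * x i :=
      Finset.sum_congr rfl fun i _ => mul_comm _ _
    unfold psi
    rw [hswap]
    field_simp
    ring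
  have Hsub : Integrable (fun x : Fin n → ℝ =>
      ((∑ i, z i * x i) ^ 4 * (∑ i, x i * x i) ^ 0) * (1 / (n : ℝ) ^ 2)
      - ((∑ i, z i * x i) ^ 2 * (∑ i, x i * x i) ^ 1) * (2 * (∑ i, z i * z i) / (n : ℝ) ^ 3))
      (stdGaussian n) :=
    ((integrable_SQ n z 4 0).mul_const _).sub ((integrable_SQ n z 2 1).mul_const _)
  rw [hpt, integral_add Hsub ((integrable_SQ n z 0 2).mul_const _),
    integral_sub ((integrable_SQ n z 4 0).mul_const _) ((integrable_SQ n z 2 1).mul_const _),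
    integral_mul_const, integral_mul_const, integral_mul_const, mom40, mom21, mom02]
  field_simp
  ring

lemma psi_abs_le (n : ℕ) (hn : 1 ≤ n) (x z : Fin n → ℝ) :
    |psi n x z| ≤ 2 * ((∑ i, x i * x i) * (∑ i, z i * z i)) := by
  have hn1 : (1 : ℝ) ≤ (n : ℝ) := by exact_mod_cast hn
  have hx : (0:ℝ) ≤ ∑ i, x i * x i :=
    Finset.sum_nonneg fun i _ => mul_self_nonneg _
  have hz : (0:ℝ) ≤ ∑ i, z i * z i :=
    Finset.sum_nonneg fun i _ => mul_self_nonneg _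
  have hCS : (∑ i, x i * z i) ^ 2 ≤ (∑ i, x i * x i) * (∑ i, z i * z i) := by
    have := Finset.sum_mul_sq_le_sq_mul_sq Finset.univ x z
    calc (∑ i, x i * z i) ^ 2 ≤ (∑ i, x i ^ 2) * ∑ i, z i ^ 2 := this
    _ = (∑ i, x i * x i) * (∑ i, z i * z i) := by
        rw [Finset.sum_congr rfl (fun (i : Fin n) _ => sq (x i) ▸ rfl : ∀ i ∈ Finset.univ, x i ^ 2 = x i * x i),
          Finset.sum_congr rfl (fun (i : Fin n) _ => sq (z i) ▸ rfl : ∀ i ∈ Finset.univ, z i ^ 2 = z i * z i)]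
  set B := (∑ i, x i * x i) * (∑ i, z i * z i) with hB
  have hBnn : 0 ≤ B := mul_nonneg hx hz
  have h1 : (∑ i, x i * z i) ^ 2 / (n:ℝ) ≤ B :=
    le_trans (div_le_self (sq_nonneg _) hn1) hCS
  have h2 : B / (n:ℝ) ^ 2 ≤ B := div_le_self hBnn (one_le_pow₀ hn1)
  have habs : |psi n x z| ≤ (∑ i, x i * z i) ^ 2 / (n:ℝ) + B / (n:ℝ) ^ 2 := by
    unfold psi
    refine (abs_sub _ _).trans ?_
    rw [abs_of_nonneg (by positivity), abs_of_nonneg (by positivity)]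
  linarith

lemma integrable_Q2 (n : ℕ) :
    Integrable (fun x : Fin n → ℝ => (∑ i, x i * x i) ^ 2) (stdGaussian n) := by
  simpa using integrable_SQ n (fun _ => (0:ℝ)) 0 2

lemma integrable_Q1 (n : ℕ) :
    Integrable (fun x : Fin n → ℝ => ∑ i, x i * x i) (stdGaussian n) := by
  simpa using integrable_SQ n (fun _ => (0:ℝ)) 0 1

lemma integrable_psi_sq_prod (n : ℕ) (hn : 1 ≤ n) :
    Integrable (fun p : (Fin n → ℝ) × (Fin n → ℝ) => psi n p.1 p.2 ^ 2)
      ((stdGaussian n).prod (stdGaussian n)) := by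
  have hg : Integrable (fun p : (Fin n → ℝ) × (Fin n → ℝ) =>
      (4 * (∑ i, p.1 i * p.1 i) ^ 2) * (∑ i, p.2 i * p.2 i) ^ 2)
      ((stdGaussian n).prod (stdGaussian n)) :=
    ((integrable_Q2 n).const_mul 4).mul_prod (integrable_Q2 n)
  refine hg.mono' (((meas_psi n).pow_const 2).aestronglyMeasurable)
    (Filter.Eventually.of_forall fun p => ?_)
  have h := psi_abs_le n hn p.1 p.2
  have h2 : psi n p.1 p.2 ^ 2 ≤ (2 * ((∑ i, p.1 i * p.1 i) * (∑ i, p.2 i * p.2 i))) ^ 2 := by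
    rw [← sq_abs]
    exact pow_le_pow_left₀ (abs_nonneg _) h 2
  rw [Real.norm_eq_abs, abs_of_nonneg (sq_nonneg _)]
  calc psi n p.1 p.2 ^ 2 ≤ (2 * ((∑ i, p.1 i * p.1 i) * (∑ i, p.2 i * p.2 i))) ^ 2 := h2
  _ = (4 * (∑ i, p.1 i * p.1 i) ^ 2) * (∑ i, p.2 i * p.2 i) ^ 2 := by ring

lemma integrable_psi_mul_trip (n : ℕ) (hn : 1 ≤ n) :
    Integrable (fun p : ((Fin n → ℝ) × (Fin n → ℝ)) × (Fin n → ℝ) =>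
      psi n p.1.1 p.2 * psi n p.1.2 p.2)
      (((stdGaussian n).prod (stdGaussian n)).prod (stdGaussian n)) := by
  have hg : Integrable (fun p : ((Fin n → ℝ) × (Fin n → ℝ)) × (Fin n → ℝ) =>
      ((4 * (∑ i, p.1.1 i * p.1.1 i)) * (∑ i, p.1.2 i * p.1.2 i)) * (∑ i, p.2 i * p.2 i) ^ 2)
      (((stdGaussian n).prod (stdGaussian n)).prod (stdGaussian n)) :=
    (((integrable_Q1 n).const_mul 4).mul_prod (integrable_Q1 n)).mul_prod (integrable_Q2 n)
  have hm : Measurable (fun p : ((Fin n → ℝ) × (Fin n → ℝ)) × (Fin n → ℝ) =>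
      psi n p.1.1 p.2 * psi n p.1.2 p.2) := by
    have h1 := (meas_psi n).comp
      (measurable_fst.fst.prodMk measurable_snd :
        Measurable fun p : ((Fin n → ℝ) × (Fin n → ℝ)) × (Fin n → ℝ) => (p.1.1, p.2))
    have h2 := (meas_psi n).comp
      (measurable_fst.snd.prodMk measurable_snd :
        Measurable fun p : ((Fin n → ℝ) × (Fin n → ℝ)) × (Fin n → ℝ) => (p.1.2, p.2))
    exact h1.mul h2
  refine hg.mono' hm.aestronglyMeasurable (Filter.Eventually.of_forall fun p => ?_)
  have h1 := psi_abs_le n hn p.1.1 p.2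
  have h2 := psi_abs_le n hn p.1.2 p.2
  have hxx : (0:ℝ) ≤ ∑ i, p.1.1 i * p.1.1 i := Finset.sum_nonneg fun i _ => mul_self_nonneg _
  have hyy : (0:ℝ) ≤ ∑ i, p.1.2 i * p.1.2 i := Finset.sum_nonneg fun i _ => mul_self_nonneg _
  have hzz : (0:ℝ) ≤ ∑ i, p.2 i * p.2 i := Finset.sum_nonneg fun i _ => mul_self_nonneg _
  rw [Real.norm_eq_abs]
  calc |psi n p.1.1 p.2 * psi n p.1.2 p.2| = |psi n p.1.1 p.2| * |psi n p.1.2 p.2| := abs_mul _ _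
  _ ≤ (2 * ((∑ i, p.1.1 i * p.1.1 i) * (∑ i, p.2 i * p.2 i)))
      * (2 * ((∑ i, p.1.2 i * p.1.2 i) * (∑ i, p.2 i * p.2 i))) := by
      exact mul_le_mul h1 h2 (abs_nonneg _) (by positivity)
  _ = ((4 * (∑ i, p.1.1 i * p.1.1 i)) * (∑ i, p.1.2 i * p.1.2 i)) * (∑ i, p.2 i * p.2 i) ^ 2 := by
      ring

lemma psi_sq_int (n : ℕ) (hn : 1 ≤ n) :
    ∫ p : (Fin n → ℝ) × (Fin n → ℝ), psi n p.1 p.2 ^ 2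
      ∂((stdGaussian n).prod (stdGaussian n))
      = 2 * ((n : ℝ) - 1) * ((n : ℝ) + 2) / (n : ℝ) ^ 2 := by
  have hn' : (n : ℝ) ≠ 0 := Nat.cast_ne_zero.2 (by omega)
  rw [integral_prod_symm _ (integrable_psi_sq_prod n hn)]
  simp only
  have hin : ∀ z : Fin n → ℝ, ∫ x, psi n x z ^ 2 ∂(stdGaussian n)
      = (2 * ((n : ℝ) - 1) / (n : ℝ) ^ 3) * (∑ i, z i * z i) ^ 2 := psi_sq n hn
  rw [show (fun z : Fin n → ℝ => ∫ x, psi n x z ^ 2 ∂(stdGaussian n))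
      = fun z => (2 * ((n : ℝ) - 1) / (n : ℝ) ^ 3) * ((∑ i, z i * z i) ^ 2)
    from funext hin]
  rw [integral_const_mul]
  have hQ : ∫ z : Fin n → ℝ, (∑ i, z i * z i) ^ 2 ∂(stdGaussian n) = (n : ℝ) ^ 2 + 2 * n := by
    simpa using mom02 n (fun _ => (0:ℝ))
  rw [hQ]
  field_simp

lemma psi_cross_int (n : ℕ) (hn : 1 ≤ n) :
    ∫ p : ((Fin n → ℝ) × (Fin n → ℝ)) × (Fin n → ℝ), psi n p.1.1 p.2 * psi n p.1.2 p.2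
      ∂(((stdGaussian n).prod (stdGaussian n)).prod (stdGaussian n)) = 0 := by
  rw [integral_prod_symm _ (integrable_psi_mul_trip n hn)]
  have hin : ∀ z : Fin n → ℝ,
      (∫ q : (Fin n → ℝ) × (Fin n → ℝ), psi n q.1 z * psi n q.2 z
        ∂((stdGaussian n).prod (stdGaussian n))) = 0 := by
    intro z
    have h := integral_prod_mul (μ := stdGaussian n) (ν := stdGaussian n)
      (f := fun x => psi n x z) (g := fun x => psi n x z)
    simp only at h
    rw [h, psi_mean n hn z, mul_zero]
  rw [show (fun z : Fin n → ℝ => ∫ q : (Fin n → ℝ) × (Fin n → ℝ),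
      psi n q.1 z * psi n q.2 z ∂((stdGaussian n).prod (stdGaussian n)))
      = fun _ => (0:ℝ) from funext hin]
  simp

lemma meas_psi_pair (n : ℕ) :
    Measurable (fun p : ((Fin n → ℝ) × (Fin n → ℝ)) × (Fin n → ℝ) =>
      psi n p.1.1 p.2 * psi n p.1.2 p.2) := by
  have h1 := (meas_psi n).comp
    (measurable_fst.fst.prodMk measurable_snd :
      Measurable fun p : ((Fin n → ℝ) × (Fin n → ℝ)) × (Fin n → ℝ) => (p.1.1, p.2))
  have h2 := (meas_psi n).comp
    (measurable_fst.snd.prodMk measurable_snd :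
      Measurable fun p : ((Fin n → ℝ) × (Fin n → ℝ)) × (Fin n → ℝ) => (p.1.2, p.2))
  exact h1.mul h2


/-- If `u₁, …, u_m, v` are independent standard `n`-dimensional Gaussian vectors, then
`E[(Σᵢ aᵢ ψ(uᵢ, v))²] = (2(n−1)(n+2)/n²) Σᵢ aᵢ²`. -/
theorem second_moment_weighted_sum_psi {Ω : Type*} [MeasurableSpace Ω] (μ : Measure Ω)
    [IsProbabilityMeasure μ]
    (n m : ℕ) (hn : 1 ≤ n) (hm : 1 ≤ m)
    (a : Fin m → ℝ) (u : Fin m → Ω → (Fin n → ℝ)) (v : Ω → (Fin n → ℝ))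
    (hu : ∀ i, Measurable (u i)) (hv : Measurable v)
    (hindep : iIndepFun
      (Fin.snoc (α := fun _ : Fin (m + 1) => Ω → (Fin n → ℝ)) u v) μ)
    (hud : ∀ i, Measure.map (u i) μ = stdGaussian n)
    (hvd : Measure.map v μ = stdGaussian n) :
    ∫ ω, (∑ i, a i * psi n (u i ω) (v ω)) ^ 2 ∂μ
      = (2 * ((n : ℝ) - 1) * ((n : ℝ) + 2) / n ^ 2) * ∑ i, (a i) ^ 2 := by
  classical
  have hmeas_snoc : ∀ k : Fin (m+1),
      Measurable (Fin.snoc (α := fun _ : Fin (m + 1) => Ω → (Fin n → ℝ)) u v k) := by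
    intro k
    refine Fin.lastCases ?_ ?_ k
    · simpa only [Fin.snoc_last] using hv
    · intro i; simpa only [Fin.snoc_castSucc] using hu i
  have hpair : ∀ i : Fin m, Measure.map (fun ω => (u i ω, v ω)) μ
      = (stdGaussian n).prod (stdGaussian n) := by
    intro i
    have hne : (Fin.castSucc i) ≠ (Fin.last m) := (Fin.castSucc_lt_last i).ne
    have hIF : IndepFun (u i) v μ := by
      have := hindep.indepFun hne
      simpa only [Fin.snoc_castSucc, Fin.snoc_last] using this
    rw [(indepFun_iff_map_prod_eq_prod_map_map (hu i).aemeasurable hv.aemeasurable).mp hIF,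
      hud i, hvd]
  have htrip : ∀ i j : Fin m, i ≠ j →
      Measure.map (fun ω => ((u i ω, u j ω), v ω)) μ
      = ((stdGaussian n).prod (stdGaussian n)).prod (stdGaussian n) := by
    intro i j hij
    have hne1 : (Fin.castSucc i) ≠ (Fin.last m) := (Fin.castSucc_lt_last i).ne
    have hne2 : (Fin.castSucc j) ≠ (Fin.last m) := (Fin.castSucc_lt_last j).ne
    have hIF : IndepFun (fun ω => (u i ω, u j ω)) v μ := by
      have := hindep.indepFun_prodMk hmeas_snoc (Fin.castSucc i) (Fin.castSucc j)
        (Fin.last m) hne1 hne2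
      simpa only [Fin.snoc_castSucc, Fin.snoc_last] using this
    have hUij : IndepFun (u i) (u j) μ := by
      have := hindep.indepFun
        (show Fin.castSucc i ≠ Fin.castSucc j from
          fun h => hij (Fin.castSucc_injective m h))
      simpa only [Fin.snoc_castSucc] using this
    rw [(indepFun_iff_map_prod_eq_prod_map_map
        ((hu i).prodMk (hu j)).aemeasurable hv.aemeasurable).mp hIF,
      (indepFun_iff_map_prod_eq_prod_map_map (hu i).aemeasurable (hu j).aemeasurable).mp hUij,
      hud i, hud j, hvd]
  have Ediag : ∀ i : Fin m, ∫ ω, psi n (u i ω) (v ω) ^ 2 ∂μ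
      = 2 * ((n : ℝ) - 1) * ((n : ℝ) + 2) / (n:ℝ) ^ 2 := by
    intro i
    have hT : AEMeasurable (fun ω => (u i ω, v ω)) μ := ((hu i).prodMk hv).aemeasurable
    have hg : AEStronglyMeasurable (fun p : (Fin n → ℝ) × (Fin n → ℝ) => psi n p.1 p.2 ^ 2)
        (Measure.map (fun ω => (u i ω, v ω)) μ) :=
      ((meas_psi n).pow_const 2).aestronglyMeasurable
    calc ∫ ω, psi n (u i ω) (v ω) ^ 2 ∂μ
        = ∫ p, psi n p.1 p.2 ^ 2 ∂(Measure.map (fun ω => (u i ω, v ω)) μ) :=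
          (integral_map hT hg).symm
      _ = 2 * ((n : ℝ) - 1) * ((n : ℝ) + 2) / (n:ℝ) ^ 2 := by
          rw [hpair i]; exact psi_sq_int n hn
  have Eoff : ∀ i j : Fin m, i ≠ j →
      ∫ ω, psi n (u i ω) (v ω) * psi n (u j ω) (v ω) ∂μ = 0 := by
    intro i j hij
    have hT : AEMeasurable (fun ω => ((u i ω, u j ω), v ω)) μ :=
      (((hu i).prodMk (hu j)).prodMk hv).aemeasurable
    have hg : AEStronglyMeasurable
        (fun p : ((Fin n → ℝ) × (Fin n → ℝ)) × (Fin n → ℝ) => psi n p.1.1 p.2 * psi n p.1.2 p.2)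
        (Measure.map (fun ω => ((u i ω, u j ω), v ω)) μ) :=
      (meas_psi_pair n).aestronglyMeasurable
    calc ∫ ω, psi n (u i ω) (v ω) * psi n (u j ω) (v ω) ∂μ
        = ∫ p, psi n p.1.1 p.2 * psi n p.1.2 p.2
            ∂(Measure.map (fun ω => ((u i ω, u j ω), v ω)) μ) :=
          (integral_map hT hg).symm
      _ = 0 := by rw [htrip i j hij]; exact psi_cross_int n hn
  have Idiag : ∀ i : Fin m, Integrable (fun ω => psi n (u i ω) (v ω) ^ 2) μ := by
    intro i
    have hT : AEMeasurable (fun ω => (u i ω, v ω)) μ := ((hu i).prodMk hv).aemeasurable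
    have hg : AEStronglyMeasurable (fun p : (Fin n → ℝ) × (Fin n → ℝ) => psi n p.1 p.2 ^ 2)
        (Measure.map (fun ω => (u i ω, v ω)) μ) :=
      ((meas_psi n).pow_const 2).aestronglyMeasurable
    exact (integrable_map_measure hg hT).mp (by rw [hpair i]; exact integrable_psi_sq_prod n hn)
  have Ioff : ∀ i j : Fin m, i ≠ j →
      Integrable (fun ω => psi n (u i ω) (v ω) * psi n (u j ω) (v ω)) μ := by
    intro i j hij
    have hT : AEMeasurable (fun ω => ((u i ω, u j ω), v ω)) μ :=
      (((hu i).prodMk (hu j)).prodMk hv).aemeasurable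
    have hg : AEStronglyMeasurable
        (fun p : ((Fin n → ℝ) × (Fin n → ℝ)) × (Fin n → ℝ) => psi n p.1.1 p.2 * psi n p.1.2 p.2)
        (Measure.map (fun ω => ((u i ω, u j ω), v ω)) μ) :=
      (meas_psi_pair n).aestronglyMeasurable
    exact (integrable_map_measure hg hT).mp
      (by rw [htrip i j hij]; exact integrable_psi_mul_trip n hn)
  have Ipair : ∀ i j : Fin m,
      Integrable (fun ω => (a i * a j) * (psi n (u i ω) (v ω) * psi n (u j ω) (v ω))) μ := by
    intro i j
    rcases eq_or_ne i j with rfl | hij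
    · exact ((Idiag i).congr
        (Filter.Eventually.of_forall fun ω => by simp [pow_two])).const_mul _
    · exact (Ioff i j hij).const_mul _
  have hexp : ∀ ω, (∑ i, a i * psi n (u i ω) (v ω)) ^ 2
      = ∑ i, ∑ j, (a i * a j) * (psi n (u i ω) (v ω) * psi n (u j ω) (v ω)) := by
    intro ω
    rw [sq, Finset.sum_mul_sum]
    exact Finset.sum_congr rfl fun i _ => Finset.sum_congr rfl fun j _ => by ring
  calc ∫ ω, (∑ i, a i * psi n (u i ω) (v ω)) ^ 2 ∂μ
      = ∫ ω, ∑ i, ∑ j, (a i * a j) * (psi n (u i ω) (v ω) * psi n (u j ω) (v ω)) ∂μ :=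
        integral_congr_ae (Filter.Eventually.of_forall hexp)
    _ = ∑ i, ∑ j, ∫ ω, (a i * a j) * (psi n (u i ω) (v ω) * psi n (u j ω) (v ω)) ∂μ := by
        rw [integral_finset_sum _ fun i _ => integrable_finset_sum _ fun j _ => Ipair i j]
        exact Finset.sum_congr rfl fun i _ => integral_finset_sum _ fun j _ => Ipair i j
    _ = ∑ i, ∑ j, (a i * a j) * ∫ ω, psi n (u i ω) (v ω) * psi n (u j ω) (v ω) ∂μ :=
        Finset.sum_congr rfl fun i _ => Finset.sum_congr rfl fun j _ => integral_const_mul _ _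
    _ = ∑ i, (a i) ^ 2 * (2 * ((n : ℝ) - 1) * ((n : ℝ) + 2) / (n:ℝ) ^ 2) := by
        refine Finset.sum_congr rfl fun i _ => ?_
        rw [Finset.sum_eq_single i]
        · have h : (∫ ω, psi n (u i ω) (v ω) * psi n (u i ω) (v ω) ∂μ)
              = ∫ ω, psi n (u i ω) (v ω) ^ 2 ∂μ := by
            refine integral_congr_ae (Filter.Eventually.of_forall fun ω => ?_)
            simp [pow_two]
          rw [h, Ediag i]
          ring
        · intro j _ hji
          rw [Eoff i j (Ne.symm hji), mul_zero]
        · intro hin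
          exact absurd (Finset.mem_univ i) hin
    _ = (2 * ((n : ℝ) - 1) * ((n : ℝ) + 2) / (n:ℝ) ^ 2) * ∑ i, (a i) ^ 2 := by
        rw [← Finset.sum_mul, mul_comm]
end
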